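/- arXiv:1308.4260 — 3 statements merged into one kernel-verified Lean document; each statement's English description precedes it below -/
import Mathlib

section
/- Let S be a biextendable set over a finite alphabet A. Let w in S, let U, V, T ⊆ S, and let ℓ in S \ U be such that ℓw in S. Set U' = (U \ Tℓ) ∪ {ℓ}, where Tℓ = {tℓ : t in T}. If the generalized extension graphs E_{U',V}(w) and E_{T,V}(ℓw) are both acyclic, then E_{U,V}(w) is acyclic. -/
open List

/-- `u` is a factor of `v`. -/
def IsFactor {A : Type*} (u v : List A) : Prop := ∃ p s : List A, v = p ++ u ++ s

/-- A set of words is factorial if it contains the factors of its elements. -/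
def Factorial {A : Type*} (S : Set (List A)) : Prop :=
  ∀ v ∈ S, ∀ u : List A, IsFactor u v → u ∈ S

/-- Left extensions of `w` in `S` taken inside the set `U`. -/
def leftExts {A : Type*} (S U : Set (List A)) (w : List A) : Set (List A) :=
  {l | l ∈ U ∧ l ++ w ∈ S}

/-- Right extensions of `w` in `S` taken inside the set `V`. -/
def rightExts {A : Type*} (S V : Set (List A)) (w : List A) : Set (List A) :=
  {r | r ∈ V ∧ w ++ r ∈ S}

/-- The generalized extension graph `E_{U,V}(w)`: a bipartite undirected graph on the
disjoint union of `U(w)` and `V(w)`, with an edge between `l` and `r` iff `l ++ w ++ r ∈ S`. -/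
def ExtGraph {A : Type*} (S U V : Set (List A)) (w : List A) :
    SimpleGraph (↥(leftExts S U w) ⊕ ↥(rightExts S V w)) where
  Adj x y :=
    (∃ l r, x = Sum.inl l ∧ y = Sum.inr r ∧ l.val ++ w ++ r.val ∈ S) ∨
    (∃ l r, x = Sum.inr r ∧ y = Sum.inl l ∧ l.val ++ w ++ r.val ∈ S)
  symm := by
    constructor
    rintro x y (⟨l, r, hx, hy, h⟩ | ⟨l, r, hx, hy, h⟩)
    · exact Or.inr ⟨l, r, hy, hx, h⟩
    · exact Or.inl ⟨l, r, hy, hx, h⟩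
  loopless := by
    constructor
    rintro x (⟨l, r, hx, hy, _⟩ | ⟨l, r, hx, hy, _⟩) <;> subst hx <;> simp at hy

/-- The set of one-letter words. -/
def letterWords (A : Type*) : Set (List A) := Set.range fun a : A => [a]

/-- The extension graph `E(w)` of `w` in `S` (extensions by letters). -/
def EGraph {A : Type*} (S : Set (List A)) (w : List A) :=
  ExtGraph S (letterWords A) (letterWords A) w

/-- `S` is biextendable: factorial and every word extends on both sides by a letter. -/
def Biext {A : Type*} (S : Set (List A)) : Prop :=
  Factorial S ∧ ∀ w ∈ S, ∃ a b : A, a :: (w ++ [b]) ∈ S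

/-- `S` is an acyclic set. -/
def SAcyclic {A : Type*} (S : Set (List A)) : Prop :=
  Biext S ∧ ∀ w ∈ S, (EGraph S w).IsAcyclic

/-- `S` is a connected set. -/
def SConn {A : Type*} (S : Set (List A)) : Prop :=
  Biext S ∧ ∀ w ∈ S, (EGraph S w).Connected

/-- `S` is a tree set. -/
def STree {A : Type*} (S : Set (List A)) : Prop :=
  Biext S ∧ ∀ w ∈ S, (EGraph S w).IsTree

/-- A prefix code: nonempty words, none a proper prefix of another. -/
def IsPrefixCode {A : Type*} (X : Set (List A)) : Prop :=
  (∀ x ∈ X, x ≠ []) ∧ ∀ x ∈ X, ∀ y ∈ X, x <+: y → x = y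

/-- A suffix code: nonempty words, none a proper suffix of another. -/
def IsSuffixCode {A : Type*} (X : Set (List A)) : Prop :=
  (∀ x ∈ X, x ≠ []) ∧ ∀ x ∈ X, ∀ y ∈ X, x <:+ y → x = y

/-- A bifix code. -/
def IsBifixCode {A : Type*} (X : Set (List A)) : Prop :=
  IsPrefixCode X ∧ IsSuffixCode X

/-- An `S`-maximal prefix code. -/
def IsSMaxPrefixCode {A : Type*} (S X : Set (List A)) : Prop :=
  IsPrefixCode X ∧ X ⊆ S ∧ ∀ Y : Set (List A), IsPrefixCode Y → Y ⊆ S → X ⊆ Y → X = Y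

/-- An `S`-maximal suffix code. -/
def IsSMaxSuffixCode {A : Type*} (S X : Set (List A)) : Prop :=
  IsSuffixCode X ∧ X ⊆ S ∧ ∀ Y : Set (List A), IsSuffixCode Y → Y ⊆ S → X ⊆ Y → X = Y

/-- An `S`-maximal bifix code. -/
def IsSMaxBifixCode {A : Type*} (S X : Set (List A)) : Prop :=
  IsBifixCode X ∧ X ⊆ S ∧ ∀ Y : Set (List A), IsBifixCode Y → Y ⊆ S → X ⊆ Y → X = Y

/-- The canonical embedding of words over `A` into the free group `F_A`. -/
def toFG {A : Type*} (w : List A) : FreeGroup A := (w.map FreeGroup.of).prod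

/-- A subset of a group is free if it is a basis of the subgroup it generates, i.e. the
induced morphism from the free group over it is injective. -/
def IsFreeSubset {G : Type*} [Group G] (X : Set G) : Prop :=
  Function.Injective ⇑(FreeGroup.lift fun x : X => (x : G))

/-- The submonoid `X*` of `A*` generated by `X`, as a set of words. -/
def star {A : Type*} (X : Set (List A)) : Set (List A) :=
  {w | ∃ l : List (List A), (∀ u ∈ l, u ∈ X) ∧ w = l.flatten}

/-- Every word of `S` is right-extendable by a letter. -/
def RightExtendable {A : Type*} (S : Set (List A)) : Prop :=
  ∀ w ∈ S, ∃ a : A, w ++ [a] ∈ S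

/-- `S` is uniformly recurrent. -/
def UnifRecurrent {A : Type*} (S : Set (List A)) : Prop :=
  RightExtendable S ∧
    ∀ u ∈ S, ∃ n : ℕ, 1 ≤ n ∧ ∀ v ∈ S, v.length = n → IsFactor u v

/-- `S` is recurrent. -/
def Recurrent {A : Type*} (S : Set (List A)) : Prop :=
  S ≠ {([] : List A)} ∧ Factorial S ∧ ∀ u ∈ S, ∀ w ∈ S, ∃ v ∈ S, u ++ v ++ w ∈ S

/-- The set `Γ_S(w)` of right return words to `w`. -/
def retWords {A : Type*} (S : Set (List A)) (w : List A) : Set (List A) :=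
  {x | x ∈ S ∧ w ++ x ∈ S ∧ ∃ y : List A, y ≠ [] ∧ w ++ x = y ++ w}

/-- The set `R_S(w)` of first right return words to `w`. -/
def firstRet {A : Type*} (S : Set (List A)) (w : List A) : Set (List A) :=
  {x | x ∈ retWords S w ∧ ¬ ∃ y ∈ retWords S w, ∃ z : List A, z ≠ [] ∧ x = y ++ z}

/-- The quantity `m(w) = e(w) - l(w) - r(w) + 1`. -/
noncomputable def mval {A : Type*} (S : Set (List A)) (w : List A) : ℤ :=
  (Set.ncard {p : A × A | p.1 :: (w ++ [p.2]) ∈ S} : ℤ)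
    - (Set.ncard {a : A | a :: w ∈ S} : ℤ) - (Set.ncard {b : A | w ++ [b] ∈ S} : ℤ) + 1

/-- A strong set: factorial and every word is strong or neutral. -/
def SStrong {A : Type*} (S : Set (List A)) : Prop :=
  Factorial S ∧ ∀ w ∈ S, 0 ≤ mval S w

/-- A weak set: factorial and every word is weak or neutral. -/
def SWeak {A : Type*} (S : Set (List A)) : Prop :=
  Factorial S ∧ ∀ w ∈ S, mval S w ≤ 0

/-- A neutral set: factorial and every word is neutral. -/
def SNeutral {A : Type*} (S : Set (List A)) : Prop :=
  Factorial S ∧ ∀ w ∈ S, mval S w = 0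


section AuxGraphLemmas

open SimpleGraph SimpleGraph.Walk

variable {X Y : Type*}


/-- every vertex on a nonempty walk is nonisolated -/
lemma walk_support_nonisolated {G : SimpleGraph X} {x y : X} (p : G.Walk x y)
    (hp : ¬ p.Nil) : ∀ z ∈ p.support, ∃ t, G.Adj z t := by
  induction p with
  | nil => simp at hp
  | @cons a b c h q ih =>
    intro z hz
    rcases List.mem_cons.mp hz with rfl | hz
    · exact ⟨b, h⟩
    · cases q with
      | nil => simp at hz; subst hz; exact ⟨a, h.symm⟩
      | cons h' q' => exact ih (by simp) z hz

lemma ends_ne_of_nodup {G : SimpleGraph X} {x y : X} (p : G.Walk x y)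
    (hne : ¬ p.Nil) (hnd : p.support.Nodup) : x ≠ y := by
  cases p with
  | nil => simp at hne
  | cons h q =>
    simp only [support_cons, List.nodup_cons] at hnd
    intro hxy; subst hxy
    exact hnd.1 (q.end_mem_support)

/-- mapping a cycle through a hom injective on nonisolated vertices -/
lemma acyclic_of_hom_injOn {G : SimpleGraph X} {H : SimpleGraph Y} (f : X → Y)
    (hhom : ∀ x y, G.Adj x y → H.Adj (f x) (f y))
    (hinj : Set.InjOn f {x | ∃ y, G.Adj x y})
    (hH : H.IsAcyclic) : G.IsAcyclic := by
  intro v c hc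
  let hom : G →g H := ⟨f, fun h => hhom _ _ h⟩
  apply hH (c.map hom)
  have hinj' : ∀ a ∈ c.support, ∀ b ∈ c.support, f a = f b → a = b := by
    intro a ha b hb hab
    exact hinj (walk_support_nonisolated c (by rw [Walk.nil_iff_eq_nil]; exact hc.ne_nil) a ha)
      (walk_support_nonisolated c (by rw [Walk.nil_iff_eq_nil]; exact hc.ne_nil) b hb) hab
  constructor
  · constructor
    · constructor
      rw [Walk.edges_map]
      refine List.Nodup.map_on ?_ hc.edges_nodup
      intro e1 he1 e2 he2 heq
      induction e1 with | _ a1 b1 =>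
      induction e2 with | _ a2 b2 =>
      simp only [Sym2.map_pair_eq, Sym2.eq_iff] at heq
      have ha1 := c.fst_mem_support_of_mem_edges he1
      have hb1 := c.snd_mem_support_of_mem_edges he1
      have ha2 := c.fst_mem_support_of_mem_edges he2
      have hb2 := c.snd_mem_support_of_mem_edges he2
      rcases heq with ⟨h1, h2⟩ | ⟨h1, h2⟩
      · rw [hinj' _ ha1 _ ha2 h1, hinj' _ hb1 _ hb2 h2]
      · rw [hinj' _ ha1 _ hb2 h1, hinj' _ hb1 _ ha2 h2, Sym2.eq_swap]
    · intro hnil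
      apply hc.ne_nil
      cases c with
      | nil => rfl
      | cons h q => simp [Walk.map_cons] at hnil
  · have hs : (c.map hom).support = c.support.map f := c.support_map hom
    rw [hs, ← List.map_tail]
    refine List.Nodup.map_on ?_ hc.support_nodup
    intro a ha b hb hab
    exact hinj' _ (List.mem_of_mem_tail ha) _ (List.mem_of_mem_tail hb) hab

lemma maxPrefix {G : SimpleGraph X} {E1 : Set (Sym2 X)} :
    ∀ {x1 y : X} (p : G.Walk x1 y) {x : X} (h : G.Adj x x1), s(x, x1) ∈ E1 →
    ∃ (b : X) (q : G.Walk x b), q.edges ≠ [] ∧ (∀ e ∈ q.edges, e ∈ E1) ∧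
      q.support.Sublist (Walk.cons h p).support ∧
      (b = y ∨ ∃ z, G.Adj b z ∧ s(b, z) ∉ E1) := by
  intro x1 y p
  induction p with
  | nil =>
    intro x h hE
    refine ⟨_, Walk.cons h Walk.nil, by simp, ?_, by simp, Or.inl rfl⟩
    intro e he; simp at he; subst he; exact hE
  | @cons a b c h' q ih =>
    intro x h hE
    by_cases hE' : s(a, b) ∈ E1
    · obtain ⟨b0, q0, hne, hall, hsub, hflank⟩ := ih h' hE'
      refine ⟨b0, Walk.cons h q0, by simp, ?_, ?_, hflank⟩
      · intro e he
        rw [Walk.edges_cons, List.mem_cons] at he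
        rcases he with rfl | he
        · exact hE
        · exact hall e he
      · rw [Walk.support_cons, Walk.support_cons]
        exact hsub.cons₂ x
    · refine ⟨a, Walk.cons h Walk.nil, by simp, ?_, ?_, Or.inr ⟨b, h', hE'⟩⟩
      · intro e he; simp at he; subst he; exact hE
      · simp only [Walk.support_cons, Walk.support_nil]
        exact ((List.nil_sublist _).cons₂ a).cons₂ x

lemma extract {G : SimpleGraph X} {E1 : Set (Sym2 X)} :
    ∀ {x y : X} (p : G.Walk x y), (∃ e ∈ p.edges, e ∈ E1) →
    ∃ (a b : X) (q : G.Walk a b), q.edges ≠ [] ∧ (∀ e ∈ q.edges, e ∈ E1) ∧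
      q.support.Sublist p.support ∧
      (a = x ∨ ∃ z, G.Adj z a ∧ s(z, a) ∉ E1) ∧
      (b = y ∨ ∃ z, G.Adj b z ∧ s(b, z) ∉ E1) := by
  intro x y p
  induction p with
  | nil => rintro ⟨e, he, -⟩; simp at he
  | @cons a b c h q ih =>
    rintro ⟨e, he, heE⟩
    by_cases hE : s(a, b) ∈ E1
    · obtain ⟨b0, q0, hne, hall, hsub, hflank⟩ := maxPrefix q h hE
      exact ⟨a, b0, q0, hne, hall, hsub, Or.inl rfl, hflank⟩
    · have hex : ∃ e ∈ q.edges, e ∈ E1 := by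
        rw [Walk.edges_cons, List.mem_cons] at he
        rcases he with rfl | he
        · exact absurd heE hE
        · exact ⟨e, he, heE⟩
      obtain ⟨a0, b0, q0, hne, hall, hsub, ha, hb⟩ := ih hex
      refine ⟨a0, b0, q0, hne, hall, ?_, ?_, hb⟩
      · rw [Walk.support_cons]
        exact hsub.trans (List.sublist_cons_self _ _)
      · rcases ha with rfl | ha
        · exact Or.inr ⟨a, h, hE⟩
        · exact Or.inr ha

lemma edge_split {G : SimpleGraph X} : ∀ {x y : X} (p : G.Walk x y) {e : Sym2 X}, e ∈ p.edges →
    ∃ (a b : X) (hab : G.Adj a b) (pre : G.Walk x a) (post : G.Walk b y),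
      p = pre.append (Walk.cons hab post) ∧ e = s(a, b) := by
  intro x y p
  induction p with
  | nil => intro e he; simp at he
  | @cons a b c h q ih =>
    intro e he
    rw [Walk.edges_cons, List.mem_cons] at he
    rcases he with rfl | he
    · exact ⟨a, b, h, Walk.nil, q, by simp, rfl⟩
    · obtain ⟨a0, b0, hab, pre, post, hq, rfl⟩ := ih he
      exact ⟨a0, b0, hab, Walk.cons h pre, post, by rw [Walk.cons_append, hq], rfl⟩

lemma rotate_cycle {G : SimpleGraph X} {v a b : X} (hab : G.Adj a b)
    (pre : G.Walk v a) (post : G.Walk b v)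
    (hc : (pre.append (Walk.cons hab post)).IsCycle) :
    (Walk.cons hab (post.append pre)).IsCycle := by
  have hed := hc.edges_nodup
  have hsup := hc.support_nodup
  rw [Walk.edges_append, Walk.edges_cons] at hed
  rw [Walk.support_append, Walk.support_cons, List.tail_cons,
    List.tail_append_of_ne_nil (Walk.support_ne_nil _)] at hsup
  refine ⟨⟨⟨?_⟩, by simp⟩, ?_⟩
  · rw [Walk.edges_cons, Walk.edges_append]
    have : (s(a, b) :: (post.edges ++ pre.edges)) =
        (s(a, b) :: post.edges) ++ pre.edges := by simp
    rw [this]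
    exact (List.perm_append_comm).nodup hed
  · rw [Walk.support_cons, List.tail_cons, Walk.support_append]
    exact (List.perm_append_comm).nodup hsup

lemma lemmaA {G1 G2 : SimpleGraph X} (h1 : G1.IsAcyclic) (h2 : G2.IsAcyclic)
    (hB : ∀ a b : X, a ≠ b → (∃ x, G2.Adj a x) → (∃ y, G2.Adj b y) → ¬ G1.Reachable a b) :
    (G1 ⊔ G2).IsAcyclic := by
  intro v c hc
  by_cases hall : ∀ e ∈ c.edges, e ∈ G1.edgeSet
  · exact h1 (c.transfer G1 hall) (hc.transfer hall)
  push_neg at hall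
  obtain ⟨estar, hestar, hE⟩ := hall
  by_cases hex : ∃ e ∈ c.edges, e ∈ G1.edgeSet
  swap
  · push_neg at hex
    have hall2 : ∀ e ∈ c.edges, e ∈ G2.edgeSet := by
      intro e he
      have h' := c.edges_subset_edgeSet he
      rw [SimpleGraph.edgeSet_sup] at h'
      rcases h' with h' | h'
      · exact absurd h' (hex e he)
      · exact h'
    exact h2 (c.transfer G2 hall2) (hc.transfer hall2)
  · obtain ⟨a, b, hab, pre, post, hdecomp, rfl⟩ := edge_split c hestar
    have hc2 : (Walk.cons hab (post.append pre)).IsCycle :=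
      rotate_cycle hab pre post (hdecomp ▸ hc)
    have hG2ab : G2.Adj a b := by
      rcases hab with h' | h'
      · exact absurd ((SimpleGraph.mem_edgeSet G1).mpr h') hE
      · exact h'
    obtain ⟨e1, he1, he1E⟩ := hex
    have he1' : e1 ∈ (post.append pre).edges := by
      rw [hdecomp, Walk.edges_append, Walk.edges_cons] at he1
      rw [Walk.edges_append]
      rcases List.mem_append.mp he1 with h' | h'
      · exact List.mem_append.mpr (Or.inr h')
      · rcases List.mem_cons.mp h' with rfl | h'
        · exact absurd he1E hE
        · exact List.mem_append.mpr (Or.inl h')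
    obtain ⟨a0, b0, q, hqne, hqall, hqsub, ha0, hb0⟩ :=
      extract (post.append pre) ⟨e1, he1', he1E⟩
    have hnd : (post.append pre).support.Nodup := by
      have h' := hc2.support_nodup
      rwa [Walk.support_cons, List.tail_cons] at h'
    have hqnd : q.support.Nodup := hqsub.nodup hnd
    have hqnotnil : ¬ q.Nil := by
      intro hn
      rw [Walk.nil_iff_length_eq] at hn
      exact hqne (List.length_eq_zero_iff.mp (by rw [Walk.length_edges]; exact hn))
    have hne' : a0 ≠ b0 := ends_ne_of_nodup q hqnotnil hqnd
    have hreach : G1.Reachable a0 b0 := ⟨q.transfer G1 (fun e he =>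
      hqall e he)⟩
    refine hB a0 b0 hne' ?_ ?_ hreach
    · rcases ha0 with rfl | ⟨z, hz, hzE⟩
      · exact ⟨a, hG2ab.symm⟩
      · refine ⟨z, ?_⟩
        rcases hz with h' | h'
        · exact absurd h' (by rwa [SimpleGraph.mem_edgeSet] at hzE)
        · exact h'.symm
    · rcases hb0 with rfl | ⟨z, hz, hzE⟩
      · exact ⟨b, hG2ab⟩
      · refine ⟨z, ?_⟩
        rcases hz with h' | h'
        · exact absurd h' (by rwa [SimpleGraph.mem_edgeSet] at hzE)
        · exact h'

lemma lemD {G : SimpleGraph X} (hG : G.IsAcyclic) {a b c : X} (h1 : G.Adj a b) (h2 : G.Adj a c)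
    (hbc : b ≠ c) (p : G.Walk b c) (ha : a ∉ p.support) : False := by
  classical
  have hq : p.bypass.IsPath := p.bypass_isPath
  have haq : a ∉ p.bypass.support := fun h => ha (p.support_bypass_subset h)
  have hP : (Walk.cons h1 p.bypass).IsPath := hq.cons haq
  refine hG _ (SimpleGraph.Path.cons_isCycle ⟨Walk.cons h1 p.bypass, hP⟩ h2.symm ?_)
  intro hmem
  rw [show ((⟨Walk.cons h1 p.bypass, hP⟩ : G.Path a c) : G.Walk a c) = Walk.cons h1 p.bypass from rfl, Walk.edges_cons, List.mem_cons] at hmem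
  rcases hmem with h' | h'
  · rw [Sym2.eq_iff] at h'
    rcases h' with ⟨rfl, rfl⟩ | ⟨h'1, -⟩
    · exact hbc rfl
    · exact hbc h'1.symm
  · exact haq (p.bypass.snd_mem_support_of_mem_edges h')

end AuxGraphLemmas

/-- If `E_{U',V}(w)` and `E_{T,V}(ℓw)` are acyclic, where `U' = (U \ Tℓ) ∪ {ℓ}`,
then `E_{U,V}(w)` is acyclic. -/
theorem statement10 {A : Type*} [Fintype A] (S : Set (List A)) (hS : Biext S)
    (w : List A) (hw : w ∈ S) (U V T : Set (List A))
    (hUS : U ⊆ S) (hVS : V ⊆ S) (hTS : T ⊆ S)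
    (l : List A) (hl : l ∈ S) (hlU : l ∉ U) (hlw : l ++ w ∈ S)
    (h1 : (ExtGraph S ((U \ {u | ∃ t ∈ T, u = t ++ l}) ∪ {l}) V w).IsAcyclic)
    (h2 : (ExtGraph S T V (l ++ w)).IsAcyclic) :
    (ExtGraph S U V w).IsAcyclic := by
  classical
  obtain ⟨hFact, -⟩ := hS
  have hfac : ∀ (t rest : List A), t ++ rest ∈ S → rest ∈ S :=
    fun t rest h => hFact _ h rest ⟨t, [], by simp⟩
  have hlwr : ∀ (t r : List A), ((t ++ l) ++ w) ++ r ∈ S → (l ++ w) ++ r ∈ S := by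
    intro t r h
    apply hfac t
    simpa [List.append_assoc] using h
  let P : (↥(leftExts S U w) ⊕ ↥(rightExts S V w)) → Prop := fun x =>
    match x with
    | Sum.inl u => ∃ t ∈ T, u.val = t ++ l
    | Sum.inr _ => False
  let G1 : SimpleGraph (↥(leftExts S U w) ⊕ ↥(rightExts S V w)) :=
    { Adj := fun x y => (ExtGraph S U V w).Adj x y ∧ ¬ P x ∧ ¬ P y
      symm := ⟨fun x y h => ⟨h.1.symm, h.2.2, h.2.1⟩⟩
      loopless := ⟨fun x h => (ExtGraph S U V w).irrefl h.1⟩ }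
  let G2 : SimpleGraph (↥(leftExts S U w) ⊕ ↥(rightExts S V w)) :=
    { Adj := fun x y => (ExtGraph S U V w).Adj x y ∧ (P x ∨ P y)
      symm := ⟨fun x y h => ⟨h.1.symm, h.2.symm⟩⟩
      loopless := ⟨fun x h => (ExtGraph S U V w).irrefl h.1⟩ }
  have hPinr : ∀ (r : ↥(rightExts S V w)), ¬ P (Sum.inr r) := fun r h => h
  have hsup : ExtGraph S U V w = G1 ⊔ G2 := by
    ext x y
    simp only [SimpleGraph.sup_adj]
    constructor
    · intro h
      by_cases hP : P x ∨ P y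
      · exact Or.inr ⟨h, hP⟩
      · push_neg at hP
        exact Or.inl ⟨h, hP.1, hP.2⟩
    · rintro (h | h) <;> exact h.1
  have hlU' : l ∈ leftExts S ((U \ {u | ∃ t ∈ T, u = t ++ l}) ∪ {l}) w :=
    ⟨Or.inr rfl, hlw⟩
  let f1 : (↥(leftExts S U w) ⊕ ↥(rightExts S V w)) →
      (↥(leftExts S ((U \ {u | ∃ t ∈ T, u = t ++ l}) ∪ {l}) w) ⊕ ↥(rightExts S V w)) :=
    Sum.elim
      (fun u => if h : ∃ t ∈ T, u.val = t ++ l then Sum.inl ⟨l, hlU'⟩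
        else Sum.inl ⟨u.val, Or.inl ⟨u.2.1, h⟩, u.2.2⟩)
      (fun r => Sum.inr r)
  have hf1inr : ∀ r, f1 (Sum.inr r) = Sum.inr r := fun r => rfl
  have hf1neg : ∀ (u : ↥(leftExts S U w)) (h : ¬ ∃ t ∈ T, u.val = t ++ l),
      f1 (Sum.inl u) = Sum.inl ⟨u.val, Or.inl ⟨u.2.1, h⟩, u.2.2⟩ := fun u h => dif_neg h
  have hhom1 : ∀ x y, G1.Adj x y →
      (ExtGraph S ((U \ {u | ∃ t ∈ T, u = t ++ l}) ∪ {l}) V w).Adj (f1 x) (f1 y) := by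
    rintro x y ⟨hadj, hPx, hPy⟩
    rcases hadj with ⟨u, r, rfl, rfl, hm⟩ | ⟨u, r, rfl, rfl, hm⟩
    · have hu : ¬ ∃ t ∈ T, u.val = t ++ l := hPx
      rw [hf1neg u hu, hf1inr]
      exact Or.inl ⟨_, r, rfl, rfl, hm⟩
    · have hu : ¬ ∃ t ∈ T, u.val = t ++ l := hPy
      rw [hf1neg u hu, hf1inr]
      exact Or.inr ⟨_, r, rfl, rfl, hm⟩
  have hinj1 : Set.InjOn f1 {x | ∃ y, G1.Adj x y} := by
    rintro x1 ⟨y1, hy1⟩ x2 ⟨y2, hy2⟩ heq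
    have hnP1 : ¬ P x1 := hy1.2.1
    have hnP2 : ¬ P x2 := hy2.2.1
    cases x1 with
    | inl u1 =>
      cases x2 with
      | inl u2 =>
        rw [hf1neg u1 hnP1, hf1neg u2 hnP2] at heq
        have hinl := Sum.inl.inj heq
        have h0 := congrArg Subtype.val hinl
        have h' : u1.val = u2.val := h0
        exact congrArg Sum.inl (Subtype.ext h')
      | inr r2 =>
        rw [hf1neg u1 hnP1, hf1inr] at heq
        exact absurd heq (by simp)
    | inr r1 =>
      cases x2 with
      | inl u2 =>
        rw [hf1neg u2 hnP2, hf1inr] at heq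
        exact absurd heq (by simp)
      | inr r2 =>
        rw [hf1inr, hf1inr] at heq
        exact congrArg Sum.inr (Sum.inr.inj heq)
  have hG1 : G1.IsAcyclic := acyclic_of_hom_injOn f1 hhom1 hinj1 h1
  have hiso2l : ∀ (u : ↥(leftExts S U w)) y, G2.Adj (Sum.inl u) y →
      ∃ t ∈ T, u.val = t ++ l := by
    rintro u y ⟨hadj, hP⟩
    rcases hP with h | h
    · exact h
    · rcases hadj with ⟨u', r', hx, hy, -⟩ | ⟨u', r', hx, hy, -⟩
      · subst hy
        exact absurd h (hPinr r')
      · exact absurd hx (by simp)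
  have hiso2r : ∀ (r : ↥(rightExts S V w)) y, G2.Adj (Sum.inr r) y →
      (l ++ w) ++ r.val ∈ S := by
    rintro r y ⟨hadj, hP⟩
    rcases hadj with ⟨u', r', hx, hy, hm⟩ | ⟨u', r', hx, hy, hm⟩
    · exact absurd hx (by simp)
    · have hrr : r = r' := Sum.inr.inj hx
      subst hrr
      have hu : ∃ t ∈ T, u'.val = t ++ l := by
        rcases hP with h | h
        · exact absurd h (hPinr r)
        · subst hy
          exact h
      obtain ⟨t, htT, hte⟩ := hu
      rw [hte] at hm
      exact hlwr t r.val (by simpa [List.append_assoc] using hm)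
  have hG2 : G2.IsAcyclic := by
    intro v c hc
    have hedge : ∃ x y, G2.Adj x y := by
      cases c with
      | nil => exact absurd rfl hc.ne_nil
      | cons h q => exact ⟨_, _, h⟩
    obtain ⟨x0, y0, hxy0⟩ := hedge
    have g2data : ∃ (u : ↥(leftExts S U w)) (r : ↥(rightExts S V w)),
        (∃ t ∈ T, u.val = t ++ l) ∧ u.val ++ w ++ r.val ∈ S := by
      rcases hxy0.1 with ⟨u, r, hx, hy, hm⟩ | ⟨u, r, hx, hy, hm⟩
      · subst hx
        exact ⟨u, r, hiso2l u _ hxy0, hm⟩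
      · subst hx
        rcases hxy0.2 with h | h
        · exact absurd h (hPinr r)
        · subst hy
          exact ⟨u, r, h, hm⟩
    obtain ⟨u0, r0, hu0, hm0⟩ := g2data
    obtain ⟨t0, ht0T, ht0e⟩ := hu0
    have hlv0 : t0 ∈ leftExts S T (l ++ w) := by
      refine ⟨ht0T, ?_⟩
      have h' := u0.2.2
      rw [ht0e] at h'
      simpa [List.append_assoc] using h'
    have hrv0 : r0.val ∈ rightExts S V (l ++ w) := by
      refine ⟨r0.2.1, ?_⟩
      rw [ht0e] at hm0
      exact hlwr t0 r0.val (by simpa [List.append_assoc] using hm0)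
    let f2 : (↥(leftExts S U w) ⊕ ↥(rightExts S V w)) →
        (↥(leftExts S T (l ++ w)) ⊕ ↥(rightExts S V (l ++ w))) :=
      Sum.elim
        (fun u => if h : ∃ t ∈ T, u.val = t ++ l then
            Sum.inl ⟨h.choose, h.choose_spec.1, by
              have h' := u.2.2
              rw [h.choose_spec.2] at h'
              simpa [List.append_assoc] using h'⟩
          else Sum.inl ⟨t0, hlv0⟩)
        (fun r => if h : (l ++ w) ++ r.val ∈ S then Sum.inr ⟨r.val, r.2.1, h⟩
          else Sum.inr ⟨r0.val, hrv0⟩)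
    have hf2r : ∀ (r : ↥(rightExts S V w)) (h : (l ++ w) ++ r.val ∈ S),
        f2 (Sum.inr r) = Sum.inr ⟨r.val, r.2.1, h⟩ := fun r h => dif_pos h
    have hf2l : ∀ (u : ↥(leftExts S U w)) (h : ∃ t ∈ T, u.val = t ++ l),
        f2 (Sum.inl u) = Sum.inl ⟨h.choose, h.choose_spec.1, by
          have h' := u.2.2
          rw [h.choose_spec.2] at h'
          simpa [List.append_assoc] using h'⟩ := fun u h => dif_pos h
    have hedgeS : ∀ (u : ↥(leftExts S U w)) (r : ↥(rightExts S V w))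
        (h : ∃ t ∈ T, u.val = t ++ l), u.val ++ w ++ r.val ∈ S →
        ((l ++ w) ++ r.val ∈ S ∧ h.choose ++ (l ++ w) ++ r.val ∈ S) := by
      intro u r h hm
      rw [h.choose_spec.2] at hm
      constructor
      · exact hlwr _ _ (by simpa [List.append_assoc] using hm)
      · simpa [List.append_assoc] using hm
    have hhom2 : ∀ x y, G2.Adj x y → (ExtGraph S T V (l ++ w)).Adj (f2 x) (f2 y) := by
      intro x y hxy
      rcases hxy.1 with ⟨u, r, hx, hy, hm⟩ | ⟨u, r, hx, hy, hm⟩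
      · subst hx; subst hy
        have hu : ∃ t ∈ T, u.val = t ++ l := hiso2l u _ hxy
        obtain ⟨hS1, hS2⟩ := hedgeS u r hu hm
        rw [hf2l u hu, hf2r r hS1]
        exact Or.inl ⟨_, _, rfl, rfl, hS2⟩
      · subst hx; subst hy
        have hu : ∃ t ∈ T, u.val = t ++ l := by
          rcases hxy.2 with h | h
          · exact absurd h (hPinr r)
          · exact h
        obtain ⟨hS1, hS2⟩ := hedgeS u r hu hm
        rw [hf2l u hu, hf2r r hS1]
        exact Or.inr ⟨_, _, rfl, rfl, hS2⟩
    have hinj2 : Set.InjOn f2 {x | ∃ y, G2.Adj x y} := by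
      rintro x1 ⟨y1, hy1⟩ x2 ⟨y2, hy2⟩ heq
      cases x1 with
      | inl u1 =>
        have hu1 := hiso2l u1 y1 hy1
        cases x2 with
        | inl u2 =>
          have hu2 := hiso2l u2 y2 hy2
          rw [hf2l u1 hu1, hf2l u2 hu2] at heq
          have hinl := Sum.inl.inj heq
          have h0 := congrArg Subtype.val hinl
          have h' : hu1.choose = hu2.choose := h0
          have h'' : u1.val = u2.val := by
            rw [hu1.choose_spec.2, hu2.choose_spec.2, h']
          exact congrArg Sum.inl (Subtype.ext h'')
        | inr r2 =>
          rw [hf2l u1 hu1, hf2r r2 (hiso2r r2 y2 hy2)] at heq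
          exact absurd heq (by simp)
      | inr r1 =>
        have hr1 := hiso2r r1 y1 hy1
        cases x2 with
        | inl u2 =>
          rw [hf2r r1 hr1, hf2l u2 (hiso2l u2 y2 hy2)] at heq
          exact absurd heq (by simp)
        | inr r2 =>
          have hr2 := hiso2r r2 y2 hy2
          rw [hf2r r1 hr1, hf2r r2 hr2] at heq
          have hinr := Sum.inr.inj heq
          have h0 := congrArg Subtype.val hinr
          have h' : r1.val = r2.val := h0
          exact congrArg Sum.inr (Subtype.ext h')
    exact acyclic_of_hom_injOn f2 hhom2 hinj2 h2 c hc
  have hB : ∀ a b, a ≠ b → (∃ x, G2.Adj a x) → (∃ y, G2.Adj b y) →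
      ¬ G1.Reachable a b := by
    rintro a b hab ⟨x, hax⟩ ⟨y, hby⟩ ⟨p⟩
    have hpn : ¬ p.Nil := SimpleGraph.Walk.not_nil_of_ne hab
    have hnP : ∀ z ∈ p.support, ¬ P z := by
      intro z hz
      obtain ⟨t', ht'⟩ := walk_support_nonisolated p hpn z hz
      exact ht'.2.1
    have hshape : ∀ (z x' : ↥(leftExts S U w) ⊕ ↥(rightExts S V w)), G2.Adj z x' → ¬ P z →
        ∃ r : ↥(rightExts S V w), z = Sum.inr r ∧ (l ++ w) ++ r.val ∈ S := by
      intro z x' hzx hnPz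
      cases z with
      | inl u => exact absurd (hiso2l u x' hzx) hnPz
      | inr r => exact ⟨r, rfl, hiso2r r x' hzx⟩
    obtain ⟨r1, rfl, hr1⟩ := hshape a x hax (hnP a p.start_mem_support)
    obtain ⟨r2, rfl, hr2⟩ := hshape b y hby (hnP b p.end_mem_support)
    have hr12 : r1 ≠ r2 := fun h => hab (congrArg Sum.inr h)
    have hadj1 : (ExtGraph S ((U \ {u | ∃ t ∈ T, u = t ++ l}) ∪ {l}) V w).Adj
        (Sum.inl ⟨l, hlU'⟩) (Sum.inr r1) :=
      Or.inl ⟨⟨l, hlU'⟩, r1, rfl, rfl, by simpa [List.append_assoc] using hr1⟩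
    have hadj2 : (ExtGraph S ((U \ {u | ∃ t ∈ T, u = t ++ l}) ∪ {l}) V w).Adj
        (Sum.inl ⟨l, hlU'⟩) (Sum.inr r2) :=
      Or.inl ⟨⟨l, hlU'⟩, r2, rfl, rfl, by simpa [List.append_assoc] using hr2⟩
    let hom1 : G1 →g ExtGraph S ((U \ {u | ∃ t ∈ T, u = t ++ l}) ∪ {l}) V w :=
      ⟨f1, fun h => hhom1 _ _ h⟩
    refine lemD h1 hadj1 hadj2 (fun h => hr12 (Sum.inr.inj h))
      ((p.map hom1).copy (hf1inr r1) (hf1inr r2)) ?_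
    intro hmem
    rw [SimpleGraph.Walk.support_copy, SimpleGraph.Walk.support_map] at hmem
    obtain ⟨z, hz, hzeq⟩ := List.mem_map.mp hmem
    cases z with
    | inr r =>
      replace hzeq : f1 (Sum.inr r) = Sum.inl ⟨l, hlU'⟩ := hzeq
      rw [hf1inr] at hzeq
      exact absurd hzeq (by simp)
    | inl u =>
      have hu : ¬ ∃ t ∈ T, u.val = t ++ l := hnP _ hz
      replace hzeq : f1 (Sum.inl u) = Sum.inl ⟨l, hlU'⟩ := hzeq
      rw [hf1neg u hu] at hzeq
      have hinl := Sum.inl.inj hzeq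
      have h0 := congrArg Subtype.val hinl
      have h' : u.val = l := h0
      exact hlU (h' ▸ u.2.1)
  rw [hsup]
  exact lemmaA hG1 hG2 hB
end

section
/- Let S be a tree set over a finite alphabet A. For any w in S, any finite S-maximal suffix code U ⊆ S and any finite S-maximal prefix code V ⊆ S, the generalized extension graph E_{U,V}(w) is a tree. -/
open List

open SimpleGraph

set_option linter.unnecessarySeqFocus false

section GraphGeneral

variable {V V' : Type*}

lemma reachable_transfer {G : SimpleGraph V} {G' : SimpleGraph V'} (f : V → V')
    (h : ∀ a b, G.Adj a b → G'.Reachable (f a) (f b)) {a b : V} (hr : G.Reachable a b) :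
    G'.Reachable (f a) (f b) := by
  obtain ⟨w⟩ := hr
  induction w with
  | nil => exact Reachable.refl _
  | cons hadj _ ih => exact (h _ _ hadj).trans ih

lemma connected_delete {G : SimpleGraph V} (hc : G.Connected) {u v : V}
    (hadj : G.Adj u v) (hbr : ¬ G.IsBridge s(u, v)) :
    (G \ SimpleGraph.fromEdgeSet {s(u, v)}).Connected := by
  rw [SimpleGraph.isBridge_iff] at hbr
  push_neg at hbr
  have hruv : (G \ SimpleGraph.fromEdgeSet {s(u, v)}).Reachable u v := hbr
  rw [connected_iff] at hc ⊢
  refine ⟨fun a b => ?_, hc.2⟩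
  have := reachable_transfer (G := G) (G' := G \ SimpleGraph.fromEdgeSet {s(u, v)}) id
    (fun a b hab => ?_) (hc.1 a b)
  · exact this
  · by_cases he : s(a, b) = s(u, v)
    · rw [Sym2.eq_iff] at he
      rcases he with ⟨rfl, rfl⟩ | ⟨rfl, rfl⟩
      · exact hruv
      · exact hruv.symm
    · refine SimpleGraph.Adj.reachable ?_
      simp only [sdiff_adj, fromEdgeSet_adj, Set.mem_singleton_iff]
      exact ⟨hab, by tauto⟩

lemma edgeSet_delete (G : SimpleGraph V) {u v : V} (h : G.Adj u v) :
    (G \ SimpleGraph.fromEdgeSet {s(u, v)}).edgeSet = G.edgeSet \ {s(u, v)} := by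
  rw [edgeSet_sdiff, edgeSet_fromEdgeSet]
  congr 1
  ext e
  simp only [Set.mem_diff, Set.mem_singleton_iff, Set.mem_setOf_eq]
  constructor
  · exact fun hh => hh.1
  · rintro rfl
    exact ⟨rfl, by simp [Sym2.mk_isDiag_iff, h.ne]⟩

lemma card_le_of_connected [Fintype V] :
    ∀ (n : ℕ) (G : SimpleGraph V), G.edgeSet.ncard = n → G.Connected →
      Fintype.card V ≤ n + 1 := by
  intro n
  induction n using Nat.strong_induction_on with
  | _ n IH =>
    intro G hn hc
    by_cases hac : G.IsAcyclic
    · have ht : G.IsTree := ⟨hc, hac⟩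
      classical
      have := ht.card_edgeFinset
      rw [← this]
      have : G.edgeFinset.card = G.edgeSet.ncard := by
        rw [Set.ncard_eq_toFinset_card']
        exact congrArg Finset.card (Set.toFinset_congr rfl)
      omega
    · rw [SimpleGraph.IsAcyclic] at hac
      push_neg at hac
      obtain ⟨v, c, hcyc⟩ := hac
      cases c with
      | nil => exact absurd hcyc (by simp [Walk.isCycle_def])
      | @cons _ b _ hvb q =>
        have hmem : s(v, b) ∈ (Walk.cons hvb q).edges := by
          simp [Walk.edges_cons]
        have hnbr : ¬ G.IsBridge s(v, b) := by
          intro hbr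
          rw [isBridge_iff_adj_and_forall_cycle_notMem (G.mem_edgeSet.mpr hvb)] at hbr
          exact hbr _ hcyc hmem
        have hG' := connected_delete hc hvb hnbr
        have hE' : (G \ SimpleGraph.fromEdgeSet {s(v, b)}).edgeSet.ncard = n - 1 := by
          rw [edgeSet_delete G hvb, Set.ncard_diff_singleton_of_mem (G.mem_edgeSet.mpr hvb), hn]
        have hpos : 1 ≤ n := by
          rw [← hn]
          have : 0 < G.edgeSet.ncard :=
            (Set.ncard_pos (Set.toFinite _)).mpr ⟨_, G.mem_edgeSet.mpr hvb⟩
          omega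
        have := IH (n - 1) (by omega) _ hE' hG'
        omega

lemma SimpleGraph.IsTree.ncard_edge [Fintype V] {G : SimpleGraph V} (h : G.IsTree) :
    G.edgeSet.ncard + 1 = Fintype.card V := by
  classical
  rw [← h.card_edgeFinset]
  congr 1
  rw [Set.ncard_eq_toFinset_card']
  exact congrArg Finset.card (Set.toFinset_congr rfl)

lemma isTree_of_connected_card [Fintype V] (G : SimpleGraph V) (hc : G.Connected)
    (hcard : G.edgeSet.ncard + 1 = Fintype.card V) : G.IsTree := by
  refine ⟨hc, ?_⟩
  intro v c hcyc
  cases c with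
  | nil => exact absurd hcyc (by simp [Walk.isCycle_def])
  | @cons _ b _ hvb q =>
    have hmem : s(v, b) ∈ (Walk.cons hvb q).edges := by simp [Walk.edges_cons]
    have hnbr : ¬ G.IsBridge s(v, b) := by
      intro hbr
      rw [isBridge_iff_adj_and_forall_cycle_notMem (G.mem_edgeSet.mpr hvb)] at hbr
      exact hbr _ hcyc hmem
    have hG' := connected_delete hc hvb hnbr
    have hE' : (G \ SimpleGraph.fromEdgeSet {s(v, b)}).edgeSet.ncard = G.edgeSet.ncard - 1 := by
      rw [edgeSet_delete G hvb, Set.ncard_diff_singleton_of_mem (G.mem_edgeSet.mpr hvb)]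
    have hpos : 0 < G.edgeSet.ncard :=
      (Set.ncard_pos (Set.toFinite _)).mpr ⟨_, G.mem_edgeSet.mpr hvb⟩
    have := card_le_of_connected _ _ hE' hG'
    omega

lemma connected_map_iso {G : SimpleGraph V} {G' : SimpleGraph V'} (φ : G ≃g G')
    (h : G.Connected) : G'.Connected := by
  rw [connected_iff] at h ⊢
  refine ⟨fun a b => ?_, Nonempty.map φ h.2⟩
  have := reachable_transfer (G := G) (G' := G') φ
    (fun a b hab => (φ.map_adj_iff.mpr hab).reachable) (h.1 (φ.symm a) (φ.symm b))
  simpa using this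

lemma isTree_map_iso [Fintype V] [Fintype V'] {G : SimpleGraph V} {G' : SimpleGraph V'}
    (φ : G ≃g G') (h : G.IsTree) : G'.IsTree := by
  refine isTree_of_connected_card _ (connected_map_iso φ h.isConnected) ?_
  have h1 := h.ncard_edge
  rw [← Fintype.card_congr φ.toEquiv, ← h1]
  congr 1
  rw [← Nat.card_coe_set_eq, ← Nat.card_coe_set_eq]
  exact (Nat.card_congr φ.mapEdgeSet).symm

end GraphGeneral

section Bip

variable {L R L' R' : Type*}

def Bip (e : L → R → Prop) : SimpleGraph (L ⊕ R) where
  Adj x y :=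
    (∃ l r, x = Sum.inl l ∧ y = Sum.inr r ∧ e l r) ∨
    (∃ l r, x = Sum.inr r ∧ y = Sum.inl l ∧ e l r)
  symm := by
    constructor
    rintro x y (⟨l, r, hx, hy, h⟩ | ⟨l, r, hx, hy, h⟩)
    · exact Or.inr ⟨l, r, hy, hx, h⟩
    · exact Or.inl ⟨l, r, hy, hx, h⟩
  loopless := by
    constructor
    rintro x (⟨l, r, hx, hy, _⟩ | ⟨l, r, hx, hy, _⟩) <;> subst hx <;> simp at hy

variable {e : L → R → Prop} {e' : L' → R' → Prop}

@[simp] lemma bip_adj_inl_inr {l : L} {r : R} :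
    (Bip e).Adj (Sum.inl l) (Sum.inr r) ↔ e l r := by
  constructor
  · rintro (⟨l', r', h1, h2, h⟩ | ⟨l', r', h1, h2, h⟩)
    · cases h1; cases h2; exact h
    · cases h1
  · exact fun h => Or.inl ⟨l, r, rfl, rfl, h⟩

@[simp] lemma bip_adj_inr_inl {l : L} {r : R} :
    (Bip e).Adj (Sum.inr r) (Sum.inl l) ↔ e l r := by
  constructor
  · rintro (⟨l', r', h1, h2, h⟩ | ⟨l', r', h1, h2, h⟩)
    · cases h1
    · cases h1; cases h2; exact h
  · exact fun h => Or.inr ⟨l, r, rfl, rfl, h⟩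

@[simp] lemma bip_adj_inl_inl {l l' : L} :
    ¬ (Bip e).Adj (Sum.inl l) (Sum.inl l') := by
  rintro (⟨a, b, h1, h2, h⟩ | ⟨a, b, h1, h2, h⟩) <;> cases h1 <;> cases h2

@[simp] lemma bip_adj_inr_inr {r r' : R} :
    ¬ (Bip e).Adj (Sum.inr r) (Sum.inr r') := by
  rintro (⟨a, b, h1, h2, h⟩ | ⟨a, b, h1, h2, h⟩) <;> cases h1 <;> cases h2

def bipIso (α : L ≃ L') (β : R ≃ R') (he : ∀ l r, e l r ↔ e' (α l) (β r)) :
    Bip e ≃g Bip e' where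
  toEquiv := Equiv.sumCongr α β
  map_rel_iff' := by
    rintro (l | r) (l' | r') <;>
      simp [Equiv.sumCongr_apply, Sum.map, he]

def bipSwapIso (e : L → R → Prop) : Bip (Function.swap e) ≃g Bip e where
  toEquiv := Equiv.sumComm R L
  map_rel_iff' := by
    rintro (r | l) (r' | l') <;> simp [Function.swap]

lemma bip_edge_ncard (e : L → R → Prop) :
    (Bip e).edgeSet.ncard = Nat.card {p : L × R // e p.1 p.2} := by
  rw [← Nat.card_coe_set_eq]
  refine Nat.card_congr (Equiv.symm (Equiv.ofBijective
    (fun p => ⟨s(Sum.inl p.1.1, Sum.inr p.1.2), by simp [p.2]⟩ :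
      {p : L × R // e p.1 p.2} → (Bip e).edgeSet) ⟨?_, ?_⟩))
  · rintro ⟨⟨l, r⟩, h⟩ ⟨⟨l', r'⟩, h'⟩ hh
    simp only [Subtype.mk.injEq, Sym2.eq_iff] at hh
    rcases hh with ⟨h1, h2⟩ | ⟨h1, h2⟩
    · cases h1; cases h2; rfl
    · cases h1
  · rintro ⟨es, hes⟩
    induction es using Sym2.ind with
    | _ x y =>
      rw [mem_edgeSet] at hes
      rcases x with l | r <;> rcases y with l' | r'
      · exact absurd hes bip_adj_inl_inl
      · exact ⟨⟨(l, r'), bip_adj_inl_inr.mp hes⟩, rfl⟩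
      · exact ⟨⟨(l', r), bip_adj_inr_inl.mp hes⟩, by simp [Sym2.eq_swap]⟩
      · exact absurd hes bip_adj_inr_inr
end Bip
section Glue

variable {L R : Type*} [Fintype L] [Fintype R]

lemma glue_isTree (e : L → R → Prop) (q : L → Prop) (p : R → Prop)
    (hp : ∀ r, p r ↔ ∃ l, q l ∧ e l r)
    (hG1 : (Bip (fun (o : Option {l // ¬ q l}) (r : R) =>
      o.elim (p r) (fun l => e l.1 r))).IsTree)
    (hH : (Bip (fun (b : {l // q l}) (r : {r // p r}) => e b.1 r.1)).IsTree) :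
    (Bip e).IsTree := by
  classical
  set eH : {l // q l} → {r // p r} → Prop := fun b r => e b.1 r.1 with heH
  set e1 : Option {l // ¬ q l} → R → Prop :=
    fun o r => o.elim (p r) (fun l => e l.1 r) with he1
  -- embedding of H into G
  set ι : ({l // q l} ⊕ {r // p r}) → (L ⊕ R) := Sum.map Subtype.val Subtype.val with hι
  have hιadj : ∀ a b, (Bip eH).Adj a b → (Bip e).Adj (ι a) (ι b) := by
    rintro (b | r) (b' | r') h
    · exact absurd h bip_adj_inl_inl
    · have h' := bip_adj_inl_inr.mp h
      exact bip_adj_inl_inr.mpr (show e b.1 r'.1 from h')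
    · have h' := bip_adj_inr_inl.mp h
      exact bip_adj_inr_inl.mpr (show e b'.1 r.1 from h')
    · exact absurd h bip_adj_inr_inr
  have reachH : ∀ a b, (Bip e).Reachable (ι a) (ι b) := fun a b =>
    reachable_transfer ι (fun a b h => ((hιadj a b h)).reachable)
      (hH.isConnected.preconnected a b)
  obtain ⟨v₀H⟩ := hH.isConnected.nonempty
  set v₀ : L ⊕ R := ι v₀H with hv₀
  have hreachp : ∀ r : R, p r → (Bip e).Reachable (Sum.inr r) v₀ := by
    intro r hr
    exact reachH (Sum.inr ⟨r, hr⟩) v₀H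
  have hreachq : ∀ l : L, q l → (Bip e).Reachable (Sum.inl l) v₀ := by
    intro l hl
    exact reachH (Sum.inl ⟨l, hl⟩) v₀H
  -- transfer of G1 walks
  set ψ : (Option {l // ¬ q l} ⊕ R) → (L ⊕ R) :=
    Sum.elim (fun o => o.elim v₀ (fun l => Sum.inl l.1)) Sum.inr with hψ
  have hψadj : ∀ a b, (Bip e1).Adj a b → (Bip e).Reachable (ψ a) (ψ b) := by
    rintro (o | r) (o' | r') h
    · exact absurd h bip_adj_inl_inl
    · rcases o with _ | l
      · exact (hreachp r' (bip_adj_inl_inr.mp h)).symm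
      · have h' := bip_adj_inl_inr.mp h
        exact (bip_adj_inl_inr.mpr (show e l.1 r' from h')).reachable
    · rcases o' with _ | l
      · exact hreachp r (bip_adj_inr_inl.mp h)
      · have h' := bip_adj_inr_inl.mp h
        exact (bip_adj_inr_inl.mpr (show e l.1 r from h')).reachable
    · exact absurd h bip_adj_inr_inr
  set π : (L ⊕ R) → (Option {l // ¬ q l} ⊕ R) :=
    Sum.map (fun l => if h : q l then none else some ⟨l, h⟩) id with hπ
  have hπreach : ∀ v : L ⊕ R, (Bip e).Reachable v (ψ (π v)) := by
    rintro (l | r)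
    · by_cases h : q l
      · simp only [hπ, hψ, Sum.map_inl, dif_pos h, Sum.elim_inl]
        exact hreachq l h
      · simp only [hπ, hψ, Sum.map_inl, dif_neg h, Sum.elim_inl]
        exact SimpleGraph.Reachable.refl _
    · exact SimpleGraph.Reachable.refl _
  have hconn : (Bip e).Connected := by
    rw [SimpleGraph.connected_iff]
    refine ⟨fun a b => ?_, ⟨v₀⟩⟩
    refine (hπreach a).trans (SimpleGraph.Reachable.trans ?_ (hπreach b).symm)
    exact reachable_transfer ψ hψadj (hG1.isConnected.preconnected (π a) (π b))
  -- counting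
  refine isTree_of_connected_card _ hconn ?_
  have c1 : (Bip e).edgeSet.ncard
      = Nat.card {x : {l // ¬ q l} × R // e x.1.1 x.2}
        + Nat.card {x : {l // q l} × R // e x.1.1 x.2} := by
    rw [bip_edge_ncard, ← Nat.card_sum]
    refine Nat.card_congr ⟨fun x => if h : q x.1.1
        then Sum.inr ⟨(⟨x.1.1, h⟩, x.1.2), x.2⟩
        else Sum.inl ⟨(⟨x.1.1, h⟩, x.1.2), x.2⟩,
      Sum.elim (fun y => ⟨(y.1.1.1, y.1.2), y.2⟩) (fun y => ⟨(y.1.1.1, y.1.2), y.2⟩),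
      ?_, ?_⟩
    · rintro ⟨⟨l, r⟩, h⟩
      by_cases hq : q l <;> simp [hq]
    · rintro (⟨⟨⟨l, hl⟩, r⟩, h⟩ | ⟨⟨⟨l, hl⟩, r⟩, h⟩) <;> simp [hl]
  have c2 : (Bip e1).edgeSet.ncard
      = Nat.card {r // p r} + Nat.card {x : {l // ¬ q l} × R // e x.1.1 x.2} := by
    rw [bip_edge_ncard, ← Nat.card_sum]
    refine Nat.card_congr ⟨fun x => match hx : x.1.1 with
        | none => Sum.inl ⟨x.1.2, by have := x.2; rw [hx] at this; exact this⟩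
        | some l => Sum.inr ⟨(l, x.1.2), by have := x.2; rw [hx] at this; exact this⟩,
      Sum.elim (fun y => ⟨(none, y.1), y.2⟩) (fun y => ⟨(some y.1.1, y.1.2), y.2⟩),
      ?_, ?_⟩
    · rintro ⟨⟨o, r⟩, h⟩
      rcases o with _ | l <;> simp
    · rintro (⟨r, h⟩ | ⟨⟨l, r⟩, h⟩) <;> simp
  have c3 : (Bip eH).edgeSet.ncard = Nat.card {x : {l // q l} × R // e x.1.1 x.2} := by
    rw [bip_edge_ncard]
    refine Nat.card_congr ⟨fun x => ⟨(x.1.1, x.1.2.1), x.2⟩,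
      fun y => ⟨(y.1.1, ⟨y.1.2, (hp _).mpr ⟨y.1.1.1, y.1.1.2, y.2⟩⟩), y.2⟩, ?_, ?_⟩
    · rintro ⟨⟨b, r⟩, h⟩; simp
    · rintro ⟨⟨b, r⟩, h⟩; simp
  have t1 := hG1.ncard_edge
  have t2 := hH.ncard_edge
  have cardL : Fintype.card L = Nat.card {l // q l} + Nat.card {l // ¬ q l} := by
    rw [Nat.card_eq_fintype_card, Nat.card_eq_fintype_card,
      ← Fintype.card_sum, Fintype.card_congr (Equiv.sumCompl q)]
  rw [Fintype.card_sum, Fintype.card_option] at t1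
  rw [Fintype.card_sum] at t2
  rw [Fintype.card_sum, c1]
  rw [c2] at t1
  rw [c3] at t2
  have e1' : Fintype.card {l // ¬ q l} = Nat.card {l // ¬ q l} :=
    (Nat.card_eq_fintype_card).symm
  have e2' : Fintype.card {l // q l} = Nat.card {l // q l} :=
    (Nat.card_eq_fintype_card).symm
  have e3' : Fintype.card {r // p r} = Nat.card {r // p r} :=
    (Nat.card_eq_fintype_card).symm
  omega

end Glue
section Lang
variable {A : Type*} {S : Set (List A)}

lemma Factorial.factor_left (hS : Factorial S) {u v : List A} (h : u ++ v ∈ S) : u ∈ S :=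
  hS _ h u ⟨[], v, by simp⟩

lemma Factorial.factor_right (hS : Factorial S) {u v : List A} (h : u ++ v ∈ S) : v ∈ S :=
  hS _ h v ⟨u, [], by simp⟩

lemma Biext.extR (hS : Biext S) {w : List A} (hw : w ∈ S) : ∃ b, w ++ [b] ∈ S := by
  obtain ⟨a, b, h⟩ := hS.2 w hw
  exact ⟨b, hS.1.factor_right (show [a] ++ (w ++ [b]) ∈ S from h)⟩

lemma Biext.extL (hS : Biext S) {w : List A} (hw : w ∈ S) : ∃ a, a :: w ∈ S := by
  obtain ⟨a, b, h⟩ := hS.2 w hw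
  exact ⟨a, hS.1.factor_left (show (a :: w) ++ [b] ∈ S from h)⟩

def PrefComplete (S V : Set (List A)) : Prop := ∀ s ∈ S, ∃ v ∈ V, v <+: s ∨ s <+: v

def SufComplete (S U : Set (List A)) : Prop := ∀ s ∈ S, ∃ u ∈ U, u <:+ s ∨ s <:+ u

lemma singleton_prefix_code {t : List A} (ht : t ≠ []) : IsPrefixCode {t} := by
  constructor
  · intro x hx; rw [Set.mem_singleton_iff] at hx; subst hx; exact ht
  · intro x hx y hy _
    rw [Set.mem_singleton_iff] at hx hy; rw [hx, hy]

lemma singleton_suffix_code {t : List A} (ht : t ≠ []) : IsSuffixCode {t} := by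
  constructor
  · intro x hx; rw [Set.mem_singleton_iff] at hx; subst hx; exact ht
  · intro x hx y hy _
    rw [Set.mem_singleton_iff] at hx hy; rw [hx, hy]

lemma max_prefix_nonempty (hS : Biext S) {V : Set (List A)} (hV : IsSMaxPrefixCode S V)
    {w₀ : List A} (hw₀ : w₀ ∈ S) : V.Nonempty := by
  by_contra h
  rw [Set.not_nonempty_iff_eq_empty] at h
  obtain ⟨a, b, ht⟩ := hS.2 w₀ hw₀
  have := hV.2.2 {a :: (w₀ ++ [b])} (singleton_prefix_code (by simp))
    (Set.singleton_subset_iff.mpr ht) (by rw [h]; exact Set.empty_subset _)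
  rw [h] at this
  have h2 : a :: (w₀ ++ [b]) ∈ (∅ : Set (List A)) := by
    rw [this]; exact Set.mem_singleton _
  exact h2

lemma max_suffix_nonempty (hS : Biext S) {U : Set (List A)} (hU : IsSMaxSuffixCode S U)
    {w₀ : List A} (hw₀ : w₀ ∈ S) : U.Nonempty := by
  by_contra h
  rw [Set.not_nonempty_iff_eq_empty] at h
  obtain ⟨a, b, ht⟩ := hS.2 w₀ hw₀
  have := hU.2.2 {a :: (w₀ ++ [b])} (singleton_suffix_code (by simp))
    (Set.singleton_subset_iff.mpr ht) (by rw [h]; exact Set.empty_subset _)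
  rw [h] at this
  have h2 : a :: (w₀ ++ [b]) ∈ (∅ : Set (List A)) := by
    rw [this]; exact Set.mem_singleton _
  exact h2

lemma prefComplete_of_max (hS : Biext S) {V : Set (List A)} (hV : IsSMaxPrefixCode S V)
    {w₀ : List A} (hw₀ : w₀ ∈ S) : PrefComplete S V := by
  intro s hs
  by_contra hno
  push_neg at hno
  obtain ⟨v0, hv0⟩ := max_prefix_nonempty hS hV hw₀
  have hsne : s ≠ [] := by
    intro h
    exact (hno v0 hv0).2 (h ▸ List.nil_prefix)
  have hY : IsPrefixCode (V ∪ {s}) := by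
    constructor
    · rintro x (hx | hx)
      · exact hV.1.1 x hx
      · rw [Set.mem_singleton_iff] at hx; subst hx; exact hsne
    · rintro x (hx | hx) y (hy | hy) hxy
      · exact hV.1.2 x hx y hy hxy
      · rw [Set.mem_singleton_iff] at hy; subst hy
        exact absurd hxy (hno x hx).1
      · rw [Set.mem_singleton_iff] at hx; subst hx
        exact absurd hxy (hno y hy).2
      · rw [Set.mem_singleton_iff] at hx hy; rw [hx, hy]
  have := hV.2.2 (V ∪ {s}) hY
    (Set.union_subset hV.2.1 (Set.singleton_subset_iff.mpr hs)) Set.subset_union_left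
  have hsV : s ∈ V := by rw [this]; exact Or.inr rfl
  exact (hno s hsV).1 (List.prefix_refl s)

lemma sufComplete_of_max (hS : Biext S) {U : Set (List A)} (hU : IsSMaxSuffixCode S U)
    {w₀ : List A} (hw₀ : w₀ ∈ S) : SufComplete S U := by
  intro s hs
  by_contra hno
  push_neg at hno
  obtain ⟨v0, hv0⟩ := max_suffix_nonempty hS hU hw₀
  have hsne : s ≠ [] := by
    intro h
    exact (hno v0 hv0).2 (h ▸ List.nil_suffix)
  have hY : IsSuffixCode (U ∪ {s}) := by
    constructor
    · rintro x (hx | hx)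
      · exact hU.1.1 x hx
      · rw [Set.mem_singleton_iff] at hx; subst hx; exact hsne
    · rintro x (hx | hx) y (hy | hy) hxy
      · exact hU.1.2 x hx y hy hxy
      · rw [Set.mem_singleton_iff] at hy; subst hy
        exact absurd hxy (hno x hx).1
      · rw [Set.mem_singleton_iff] at hx; subst hx
        exact absurd hxy (hno y hy).2
      · rw [Set.mem_singleton_iff] at hx hy; rw [hx, hy]
  have := hU.2.2 (U ∪ {s}) hY
    (Set.union_subset hU.2.1 (Set.singleton_subset_iff.mpr hs)) Set.subset_union_left
  have hsU : s ∈ U := by rw [this]; exact Or.inr rfl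
  exact (hno s hsU).1 (List.suffix_refl s)

lemma max_of_prefComplete {V : Set (List A)} (hcode : IsPrefixCode V) (hVS : V ⊆ S)
    (hcomp : PrefComplete S V) : IsSMaxPrefixCode S V := by
  refine ⟨hcode, hVS, fun Y hY hYS hVY => Set.Subset.antisymm hVY (fun y hy => ?_)⟩
  obtain ⟨v, hv, hcase⟩ := hcomp y (hYS hy)
  rcases hcase with h | h
  · rw [← hY.2 v (hVY hv) y hy h]; exact hv
  · rw [hY.2 y hy v (hVY hv) h]; exact hv

lemma max_of_sufComplete {U : Set (List A)} (hcode : IsSuffixCode U) (hUS : U ⊆ S)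
    (hcomp : SufComplete S U) : IsSMaxSuffixCode S U := by
  refine ⟨hcode, hUS, fun Y hY hYS hVY => Set.Subset.antisymm hVY (fun y hy => ?_)⟩
  obtain ⟨v, hv, hcase⟩ := hcomp y (hYS hy)
  rcases hcase with h | h
  · rw [← hY.2 v (hVY hv) y hy h]; exact hv
  · rw [hY.2 y hy v (hVY hv) h]; exact hv

end Lang
section BipOf
variable {A : Type*}

def bipOf (S Lset Rset : Set (List A)) (w : List A) : SimpleGraph (↥Lset ⊕ ↥Rset) :=
  Bip (fun (l : ↥Lset) (r : ↥Rset) => l.val ++ w ++ r.val ∈ S)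

lemma extGraph_eq (S U V : Set (List A)) (w : List A) :
    ExtGraph S U V w = bipOf S (leftExts S U w) (rightExts S V w) w := rfl

end BipOf
section Stage1
variable {A : Type*} [Fintype A]

lemma stage1 {S : Set (List A)} (hS : STree S) :
    ∀ (n : ℕ) (V : Finset (List A)), V.sum List.length = n →
      IsSMaxPrefixCode S ↑V → ∀ x ∈ S, (ExtGraph S (letterWords A) ↑V x).IsTree := by
  intro n
  induction n using Nat.strong_induction_on with
  | _ n IH =>
  intro V hn hV x hx
  classical
  have hFac : Factorial S := hS.1.1
  have hVcomp : PrefComplete S ↑V := prefComplete_of_max hS.1 hV hx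
  by_cases hbase : ∀ v ∈ V, v.length = 1
  -- ============ base case ============
  · have hre : rightExts S (↑V : Set (List A)) x = rightExts S (letterWords A) x := by
      ext r
      constructor
      · rintro ⟨hrV, hxr⟩
        obtain ⟨c, hc⟩ := List.length_eq_one_iff.mp (hbase r (Finset.mem_coe.mp hrV))
        exact ⟨⟨c, hc.symm⟩, hxr⟩
      · rintro ⟨hrl, hxr⟩
        obtain ⟨c, hc⟩ := hrl
        have hrS : r ∈ S := hFac.factor_right hxr
        obtain ⟨y, hy, hcase⟩ := hVcomp r hrS
        have hylen : y.length = 1 := hbase y (Finset.mem_coe.mp hy)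
        have hrlen : r.length = 1 := by rw [← hc]; rfl
        rcases hcase with h | h
        · have : y = r := h.eq_of_length (by omega)
          exact ⟨this ▸ hy, hxr⟩
        · have : r = y := h.eq_of_length (by omega)
          exact ⟨this ▸ hy, hxr⟩
    rw [extGraph_eq, hre]
    exact hS.2 x hx
  -- ============ inductive step ============
  · push_neg at hbase
    obtain ⟨w1, hw1V, hw1len⟩ := hbase
    obtain ⟨m, hmV, hmax⟩ := Finset.exists_max_image V List.length ⟨w1, hw1V⟩
    have hmne : m ≠ [] := hV.1.1 m (Finset.mem_coe.mpr hmV)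
    have hm2 : 2 ≤ m.length := by
      have h1 := hmax w1 hw1V
      have h2 : w1 ≠ [] := hV.1.1 w1 (Finset.mem_coe.mpr hw1V)
      have h3 : 1 ≤ w1.length := List.length_pos_iff.mpr h2
      have h4 : 1 ≤ m.length := List.length_pos_iff.mpr hmne
      omega
    set v' : List A := m.dropLast with hv'def
    have hm : v' ++ [m.getLast hmne] = m := List.dropLast_append_getLast hmne
    have hv'len : v'.length + 1 = m.length := by
      conv_rhs => rw [← hm]
      rw [List.length_append]
      simp
    have hv'ne : v' ≠ [] := by
      intro h
      rw [h] at hv'len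
      simp at hv'len
      omega
    have hmS : m ∈ S := hV.2.1 (Finset.mem_coe.mpr hmV)
    have hv'S : v' ∈ S := hFac.factor_left (u := v') (v := [m.getLast hmne])
      (by rw [hm]; exact hmS)
    have h_noprefix : ∀ y ∈ V, ¬ y <+: v' := by
      intro y hy hpre
      have hym : y <+: m := hpre.trans ⟨[m.getLast hmne], hm⟩
      have heq : y = m := hV.1.2 y (Finset.mem_coe.mpr hy) m (Finset.mem_coe.mpr hmV) hym
      have hylen := hpre.length_le
      rw [heq] at hylen
      omega
    have hv'notV : v' ∉ V := fun h => h_noprefix v' h (List.prefix_refl v')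
    have h_split_mem : ∀ c : A, v' ++ [c] ∈ S → v' ++ [c] ∈ V := by
      intro c hcS
      obtain ⟨y, hy, hcase⟩ := hVcomp (v' ++ [c]) hcS
      rcases hcase with h | h
      · rcases List.prefix_concat_iff.mp h with h' | h'
        · rwa [← h']
        · exact absurd h' (h_noprefix y (Finset.mem_coe.mp hy))
      · have hyl := hmax y (Finset.mem_coe.mp hy)
        have h1 := h.length_le
        have h2 : (v' ++ [c]).length = v'.length + 1 := by simp
        have : v' ++ [c] = y := h.eq_of_length (by omega)
        rw [this]
        exact Finset.mem_coe.mp hy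
    set V₁ : Finset (List A) :=
      (V.filter (fun l => ¬ ∃ c : A, l = v' ++ [c])) ∪ {v'} with hV₁def
    have hmemV₁ : ∀ z, z ∈ V₁ ↔ (z ∈ V ∧ ¬ ∃ c : A, z = v' ++ [c]) ∨ z = v' := by
      intro z
      simp [hV₁def, Finset.mem_union, Finset.mem_filter, Finset.mem_singleton, or_comm]
    have hV₁S : (↑V₁ : Set (List A)) ⊆ S := by
      intro z hz
      rcases (hmemV₁ z).mp (Finset.mem_coe.mp hz) with ⟨h1, _⟩ | h1
      · exact hV.2.1 (Finset.mem_coe.mpr h1)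
      · rw [h1]; exact hv'S
    have hV₁code : IsPrefixCode (↑V₁ : Set (List A)) := by
      constructor
      · intro z hz
        rcases (hmemV₁ z).mp (Finset.mem_coe.mp hz) with ⟨h1, _⟩ | h1
        · exact hV.1.1 z (Finset.mem_coe.mpr h1)
        · rw [h1]; exact hv'ne
      · intro z hz y hy hzy
        rcases (hmemV₁ z).mp (Finset.mem_coe.mp hz) with ⟨hz1, hz2⟩ | hz1 <;>
          rcases (hmemV₁ y).mp (Finset.mem_coe.mp hy) with ⟨hy1, hy2⟩ | hy1
        · exact hV.1.2 z (Finset.mem_coe.mpr hz1) y (Finset.mem_coe.mpr hy1) hzy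
        · exact absurd (hy1 ▸ hzy) (h_noprefix z hz1)
        · -- z = v', y ∈ V, ¬∃c y = v'++[c]
          obtain ⟨t, ht⟩ := hzy
          have hylen := hmax y hy1
          have hlen : y.length = z.length + t.length := by rw [← ht]; simp
          have hzlen : z.length = v'.length := by rw [hz1]
          have htlen : t.length ≤ 1 := by omega
          rcases Nat.le_one_iff_eq_zero_or_eq_one.mp htlen with h0 | h1
          · rw [List.length_eq_zero_iff.mp h0, List.append_nil] at ht
            exact ht
          · obtain ⟨c, hc⟩ := List.length_eq_one_iff.mp h1
            rw [hc, hz1] at ht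
            exact absurd ⟨c, ht.symm⟩ hy2
        · rw [hz1, hy1]
    have hV₁comp : PrefComplete S ↑V₁ := by
      intro s hs
      obtain ⟨y, hy, hcase⟩ := hVcomp s hs
      by_cases hQ : ∃ c : A, y = v' ++ [c]
      · obtain ⟨c, rfl⟩ := hQ
        have hv'V₁ : v' ∈ (↑V₁ : Set (List A)) :=
          Finset.mem_coe.mpr ((hmemV₁ v').mpr (Or.inr rfl))
        rcases hcase with h | h
        · exact ⟨v', hv'V₁, Or.inl ((List.prefix_append v' [c]).trans h)⟩
        · rcases List.prefix_concat_iff.mp h with h' | h'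
          · exact ⟨v', hv'V₁, Or.inl (h' ▸ List.prefix_append v' [c])⟩
          · exact ⟨v', hv'V₁, Or.inr h'⟩
      · exact ⟨y, Finset.mem_coe.mpr ((hmemV₁ y).mpr
          (Or.inl ⟨Finset.mem_coe.mp hy, hQ⟩)), hcase⟩
    have hV₁max : IsSMaxPrefixCode S ↑V₁ := max_of_prefComplete hV₁code hV₁S hV₁comp
    have hsum : V₁.sum List.length < n := by
      have hv'filt : v' ∉ V.filter (fun l => ¬ ∃ c : A, l = v' ++ [c]) := by
        intro h
        exact hv'notV (Finset.mem_filter.mp h).1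
      have h1 : V₁.sum List.length
          = (V.filter (fun l => ¬ ∃ c : A, l = v' ++ [c])).sum List.length + v'.length := by
        rw [hV₁def, Finset.sum_union (Finset.disjoint_singleton_right.mpr hv'filt)]
        simp
      have hmfilt : V.filter (fun l => ¬ ∃ c : A, l = v' ++ [c]) ⊆ V.erase m := by
        intro z hz
        rw [Finset.mem_filter] at hz
        rw [Finset.mem_erase]
        refine ⟨fun hzm => hz.2 ⟨m.getLast hmne, hzm.trans hm.symm⟩, hz.1⟩
      have h2 : (V.filter (fun l => ¬ ∃ c : A, l = v' ++ [c])).sum List.length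
          ≤ (V.erase m).sum List.length :=
        Finset.sum_le_sum_of_subset hmfilt
      have h3 : (V.erase m).sum List.length + m.length = V.sum List.length :=
        Finset.sum_erase_add V List.length hmV
      omega
    -- Fintype instances
    haveI fL : Fintype ↥(leftExts S (letterWords A) x) :=
      ((Set.finite_range _).subset (fun l hl => hl.1)).fintype
    haveI fRf : Fintype ↥(rightExts S (↑V : Set (List A)) x) :=
      (V.finite_toSet.subset (fun r hr => hr.1)).fintype
    haveI fR₁ : Fintype ↥(rightExts S (↑V₁ : Set (List A)) x) :=
      (V₁.finite_toSet.subset (fun r hr => hr.1)).fintype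
    have T₁ : (ExtGraph S (letterWords A) (↑V₁ : Set (List A)) x).IsTree :=
      IH (V₁.sum List.length) hsum V₁ rfl hV₁max x hx
    by_cases hxv' : x ++ v' ∈ S
    -- ======== main subcase: the merged vertex exists ========
    · -- notation
      set L : Set (List A) := leftExts S (letterWords A) x with hLdef
      set Rf : Set (List A) := rightExts S (↑V : Set (List A)) x with hRdef
      set R₁ : Set (List A) := rightExts S (↑V₁ : Set (List A)) x with hR₁def
      set e₀ : ↥L → ↥Rf → Prop := fun l r => l.val ++ x ++ r.val ∈ S with he₀def
      set qp : ↥Rf → Prop := fun r => ∃ c : A, r.val = v' ++ [c] with hqpdef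
      set pp : ↥L → Prop := fun l => l.val ++ x ++ v' ∈ S with hppdef
      have hv'R₁ : v' ∈ R₁ :=
        ⟨Finset.mem_coe.mpr ((hmemV₁ v').mpr (Or.inr rfl)), hxv'⟩
      -- hp
      have hp : ∀ l : ↥L, pp l ↔ ∃ r : ↥Rf, qp r ∧ (Function.swap e₀) r l := by
        intro l
        constructor
        · intro hpl
          obtain ⟨c, hc⟩ := hS.1.extR hpl
          have hvcS : v' ++ [c] ∈ S := by
            have : (l.val ++ x) ++ (v' ++ [c]) ∈ S := by
              simpa [List.append_assoc] using hc
            exact hFac.factor_right this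
          have hxvc : x ++ (v' ++ [c]) ∈ S := by
            have : l.val ++ (x ++ (v' ++ [c])) ∈ S := by
              simpa [List.append_assoc] using hc
            exact hFac.factor_right this
          refine ⟨⟨v' ++ [c], Finset.mem_coe.mpr (h_split_mem c hvcS), hxvc⟩, ⟨c, rfl⟩, ?_⟩
          show l.val ++ x ++ (v' ++ [c]) ∈ S
          simpa [List.append_assoc] using hc
        · rintro ⟨r, ⟨c, hc⟩, her⟩
          have her' : l.val ++ x ++ r.val ∈ S := her
          rw [hc] at her'
          have : (l.val ++ x ++ v') ++ [c] ∈ S := by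
            simpa [List.append_assoc] using her'
          exact hFac.factor_left this
      -- the G1 graph
      have hmem₁ : ∀ r₁ : ↥R₁, r₁.val ≠ v' →
          r₁.val ∈ Rf ∧ ¬ ∃ c : A, r₁.val = v' ++ [c] := by
        intro r₁ hne
        have h1 := r₁.2.1
        rcases (hmemV₁ r₁.val).mp (Finset.mem_coe.mp h1) with ⟨h2, h3⟩ | h2
        · exact ⟨⟨Finset.mem_coe.mpr h2, r₁.2.2⟩, h3⟩
        · exact absurd h2 hne
      have hmem₂ : ∀ r : {r : ↥Rf // ¬ qp r}, r.val.val ∈ R₁ := by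
        intro r
        refine ⟨Finset.mem_coe.mpr ((hmemV₁ r.val.val).mpr
          (Or.inl ⟨Finset.mem_coe.mp r.val.2.1, r.2⟩)), r.val.2.2⟩
      set γ : ↥R₁ ≃ Option {r : ↥Rf // ¬ qp r} :=
        { toFun := fun r₁ => if h : r₁.val = v' then none else
            some ⟨⟨r₁.val, (hmem₁ r₁ h).1⟩, (hmem₁ r₁ h).2⟩
          invFun := fun o => o.elim ⟨v', hv'R₁⟩ (fun r => ⟨r.val.val, hmem₂ r⟩)
          left_inv := by
            intro r₁
            by_cases h : r₁.val = v'
            · simp only [dif_pos h]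
              exact Subtype.ext h.symm
            · simp only [dif_neg h]
              rfl
          right_inv := by
            rintro (_ | r)
            · show (if h : (v' : List A) = v' then none else _) = none
              rw [dif_pos rfl]
            · have hne : r.val.val ≠ v' := by
                intro h
                apply hv'notV
                have hmem := r.val.2.1
                rw [h] at hmem
                exact Finset.mem_coe.mp hmem
              show (if h : r.val.val = v' then none else _) = some r
              rw [dif_neg hne]
              exact congrArg some (Subtype.ext (Subtype.ext rfl)) } with hγdef
      have hG1 : (Bip (fun (o : Option {r : ↥Rf // ¬ qp r}) (l : ↥L) =>
          o.elim (pp l) (fun r => (Function.swap e₀) r.val l))).IsTree := by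
        have T₁s : (Bip (Function.swap (fun (l : ↥L) (r : ↥R₁) =>
            l.val ++ x ++ r.val ∈ S))).IsTree :=
          isTree_map_iso (bipSwapIso _).symm T₁
        refine isTree_map_iso (bipIso γ (Equiv.refl ↥L) ?_) T₁s
        intro r₁ l
        by_cases h : r₁.val = v'
        · simp only [hγdef, Equiv.coe_fn_mk, dif_pos h]
          show l.val ++ x ++ r₁.val ∈ S ↔ pp l
          rw [h]
        · simp only [hγdef, Equiv.coe_fn_mk, dif_neg h]
          exact Iff.rfl
      -- the H graph
      set LH : Set (List A) := leftExts S (letterWords A) (x ++ v') with hLHdef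
      set RH : Set (List A) := rightExts S (letterWords A) (x ++ v') with hRHdef
      haveI fLH : Fintype ↥LH := ((Set.finite_range _).subset (fun l hl => hl.1)).fintype
      haveI fRH : Fintype ↥RH := ((Set.finite_range _).subset (fun r hr => hr.1)).fintype
      have hαmem : ∀ rh : ↥RH, v' ++ rh.val ∈ Rf := by
        intro rh
        obtain ⟨c, hc⟩ := rh.2.1
        have hc' : [c] = rh.val := hc
        have h2 : (x ++ v') ++ rh.val ∈ S := rh.2.2
        have h2' : x ++ (v' ++ rh.val) ∈ S := by simpa [List.append_assoc] using h2
        constructor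
        · rw [← hc']
          refine Finset.mem_coe.mpr (h_split_mem c (hFac.factor_right
            (show x ++ (v' ++ [c]) ∈ S from ?_)))
          rw [hc']
          exact h2'
        · exact h2'
      have hαq : ∀ rh : ↥RH, qp ⟨v' ++ rh.val, hαmem rh⟩ := by
        intro rh
        obtain ⟨c, hc⟩ := rh.2.1
        have hc' : [c] = rh.val := hc
        refine ⟨c, ?_⟩
        show v' ++ rh.val = v' ++ [c]
        rw [← hc']
      have hαinv : ∀ rq : {r : ↥Rf // qp r}, rq.val.val.drop v'.length ∈ RH := by
        intro rq
        obtain ⟨c, hc⟩ := rq.2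
        constructor
        · rw [hc, List.drop_left]
          exact ⟨c, rfl⟩
        · show (x ++ v') ++ (rq.val.val.drop v'.length) ∈ S
          rw [hc, List.drop_left]
          have := rq.val.2.2
          rw [hc] at this
          simpa [List.append_assoc] using this
      set αH : ↥RH ≃ {r : ↥Rf // qp r} :=
        { toFun := fun rh => ⟨⟨v' ++ rh.val, hαmem rh⟩, hαq rh⟩
          invFun := fun rq => ⟨rq.val.val.drop v'.length, hαinv rq⟩
          left_inv := by
            intro rh
            exact Subtype.ext (List.drop_left (l₁ := v') (l₂ := rh.val))
          right_inv := by
            intro rq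
            obtain ⟨c, hc⟩ := rq.2
            refine Subtype.ext (Subtype.ext ?_)
            show v' ++ (rq.val.val.drop v'.length) = rq.val.val
            rw [hc, List.drop_left] } with hαdef
      have hβmem : ∀ lh : ↥LH, lh.val ∈ L := by
        intro lh
        refine ⟨lh.2.1, ?_⟩
        have h2 : lh.val ++ (x ++ v') ∈ S := lh.2.2
        refine hFac.factor_left (show (lh.val ++ x) ++ v' ∈ S from ?_)
        simpa [List.append_assoc] using h2
      have hβp : ∀ lh : ↥LH, pp ⟨lh.val, hβmem lh⟩ := by
        intro lh
        show lh.val ++ x ++ v' ∈ S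
        have h2 : lh.val ++ (x ++ v') ∈ S := lh.2.2
        simpa [List.append_assoc] using h2
      have hβinv : ∀ lp : {l : ↥L // pp l}, lp.val.val ∈ LH := by
        intro lp
        refine ⟨lp.val.2.1, ?_⟩
        show lp.val.val ++ (x ++ v') ∈ S
        have h2 : lp.val.val ++ x ++ v' ∈ S := lp.2
        simpa [List.append_assoc] using h2
      set βH : ↥LH ≃ {l : ↥L // pp l} :=
        { toFun := fun lh => ⟨⟨lh.val, hβmem lh⟩, hβp lh⟩
          invFun := fun lp => ⟨lp.val.val, hβinv lp⟩
          left_inv := fun lh => Subtype.ext rfl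
          right_inv := fun lp => Subtype.ext (Subtype.ext rfl) } with hβdef
      have hH : (Bip (fun (b : {r : ↥Rf // qp r}) (rr : {l : ↥L // pp l}) =>
          (Function.swap e₀) b.val rr.val)).IsTree := by
        have TH : (ExtGraph S (letterWords A) (letterWords A) (x ++ v')).IsTree :=
          hS.2 (x ++ v') hxv'
        have THs : (Bip (Function.swap (fun (l : ↥LH) (r : ↥RH) =>
            l.val ++ (x ++ v') ++ r.val ∈ S))).IsTree :=
          isTree_map_iso (bipSwapIso _).symm TH
        refine isTree_map_iso (bipIso αH βH ?_) THs
        intro rh lh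
        show lh.val ++ (x ++ v') ++ rh.val ∈ S ↔ lh.val ++ x ++ (v' ++ rh.val) ∈ S
        rw [show lh.val ++ (x ++ v') ++ rh.val = lh.val ++ x ++ (v' ++ rh.val) by
          simp [List.append_assoc]]
      -- glue
      have hglue := glue_isTree (Function.swap e₀) qp pp hp hG1 hH
      exact isTree_map_iso (bipSwapIso e₀) hglue
    -- ======== degenerate subcase: merged vertex absent ========
    · have hre : rightExts S (↑V : Set (List A)) x = rightExts S (↑V₁ : Set (List A)) x := by
        ext r
        constructor
        · rintro ⟨hrV, hxr⟩
          have hnq : ¬ ∃ c : A, r = v' ++ [c] := by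
            rintro ⟨c, rfl⟩
            refine hxv' (hFac.factor_left (show (x ++ v') ++ [c] ∈ S from ?_))
            simpa [List.append_assoc] using hxr
          exact ⟨Finset.mem_coe.mpr ((hmemV₁ r).mpr (Or.inl ⟨Finset.mem_coe.mp hrV, hnq⟩)),
            hxr⟩
        · rintro ⟨hrV₁, hxr⟩
          rcases (hmemV₁ r).mp (Finset.mem_coe.mp hrV₁) with ⟨h1, _⟩ | h1
          · exact ⟨Finset.mem_coe.mpr h1, hxr⟩
          · exact absurd (h1 ▸ hxr) hxv'
      rw [extGraph_eq, hre]
      exact T₁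

end Stage1
section Stage2
variable {A : Type*} [Fintype A]

lemma stage2 {S : Set (List A)} (hS : STree S) (V : Finset (List A))
    (hV : IsSMaxPrefixCode S ↑V) :
    ∀ (n : ℕ) (U : Finset (List A)), U.sum List.length = n →
      IsSMaxSuffixCode S ↑U → ∀ w ∈ S, (ExtGraph S ↑U ↑V w).IsTree := by
  intro n
  induction n using Nat.strong_induction_on with
  | _ n IH =>
  intro U hn hU w hw
  classical
  have hFac : Factorial S := hS.1.1
  have hUcomp : SufComplete S ↑U := sufComplete_of_max hS.1 hU hw
  by_cases hbase : ∀ u ∈ U, u.length = 1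
  -- ============ base case ============
  · have hle : leftExts S (↑U : Set (List A)) w = leftExts S (letterWords A) w := by
      ext l
      constructor
      · rintro ⟨hlU, hlw⟩
        obtain ⟨c, hc⟩ := List.length_eq_one_iff.mp (hbase l (Finset.mem_coe.mp hlU))
        exact ⟨⟨c, hc.symm⟩, hlw⟩
      · rintro ⟨hll, hlw⟩
        obtain ⟨c, hc⟩ := hll
        have hlS : l ∈ S := hFac.factor_left hlw
        obtain ⟨y, hy, hcase⟩ := hUcomp l hlS
        have hylen : y.length = 1 := hbase y (Finset.mem_coe.mp hy)
        have hllen : l.length = 1 := by rw [← hc]; rfl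
        rcases hcase with h | h
        · have : y = l := h.eq_of_length (by omega)
          exact ⟨this ▸ hy, hlw⟩
        · have : l = y := h.eq_of_length (by omega)
          exact ⟨this ▸ hy, hlw⟩
    rw [extGraph_eq, hle]
    exact stage1 hS (V.sum List.length) V rfl hV w hw
  -- ============ inductive step ============
  · push_neg at hbase
    obtain ⟨w1, hw1U, hw1len⟩ := hbase
    obtain ⟨m, hmU, hmax⟩ := Finset.exists_max_image U List.length ⟨w1, hw1U⟩
    have hmne : m ≠ [] := hU.1.1 m (Finset.mem_coe.mpr hmU)
    have hm2 : 2 ≤ m.length := by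
      have h1 := hmax w1 hw1U
      have h2 : w1 ≠ [] := hU.1.1 w1 (Finset.mem_coe.mpr hw1U)
      have h3 : 1 ≤ w1.length := List.length_pos_iff.mpr h2
      have h4 : 1 ≤ m.length := List.length_pos_iff.mpr hmne
      omega
    set u' : List A := m.tail with hu'def
    have hm : m.head hmne :: u' = m := List.cons_head_tail hmne
    have hu'len : u'.length + 1 = m.length := by
      conv_rhs => rw [← hm]
      simp
    have hu'ne : u' ≠ [] := by
      intro h
      rw [h] at hu'len
      simp at hu'len
      omega
    have hmS : m ∈ S := hU.2.1 (Finset.mem_coe.mpr hmU)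
    have hu'S : u' ∈ S := hFac.factor_right (u := [m.head hmne]) (v := u')
      (by rw [List.singleton_append, hm]; exact hmS)
    have h_nosuffix : ∀ y ∈ U, ¬ y <:+ u' := by
      intro y hy hsuf
      have hym : y <:+ m := hsuf.trans ⟨[m.head hmne], by rw [List.singleton_append, hm]⟩
      have heq : y = m := hU.1.2 y (Finset.mem_coe.mpr hy) m (Finset.mem_coe.mpr hmU) hym
      have hylen := hsuf.length_le
      rw [heq] at hylen
      omega
    have hu'notU : u' ∉ U := fun h => h_nosuffix u' h (List.suffix_refl u')
    have h_split_mem : ∀ b : A, b :: u' ∈ S → b :: u' ∈ U := by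
      intro b hbS
      obtain ⟨y, hy, hcase⟩ := hUcomp (b :: u') hbS
      rcases hcase with h | h
      · rcases List.suffix_cons_iff.mp h with h' | h'
        · rwa [← h']
        · exact absurd h' (h_nosuffix y (Finset.mem_coe.mp hy))
      · have hyl := hmax y (Finset.mem_coe.mp hy)
        have h1 := h.length_le
        have h2 : (b :: u').length = u'.length + 1 := by simp
        have : b :: u' = y := h.eq_of_length (by omega)
        rw [this]
        exact Finset.mem_coe.mp hy
    set U₁ : Finset (List A) :=
      (U.filter (fun l => ¬ ∃ b : A, l = b :: u')) ∪ {u'} with hU₁def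
    have hmemU₁ : ∀ z, z ∈ U₁ ↔ (z ∈ U ∧ ¬ ∃ b : A, z = b :: u') ∨ z = u' := by
      intro z
      simp [hU₁def, Finset.mem_union, Finset.mem_filter, Finset.mem_singleton, or_comm]
    have hU₁S : (↑U₁ : Set (List A)) ⊆ S := by
      intro z hz
      rcases (hmemU₁ z).mp (Finset.mem_coe.mp hz) with ⟨h1, _⟩ | h1
      · exact hU.2.1 (Finset.mem_coe.mpr h1)
      · rw [h1]; exact hu'S
    have hU₁code : IsSuffixCode (↑U₁ : Set (List A)) := by
      constructor
      · intro z hz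
        rcases (hmemU₁ z).mp (Finset.mem_coe.mp hz) with ⟨h1, _⟩ | h1
        · exact hU.1.1 z (Finset.mem_coe.mpr h1)
        · rw [h1]; exact hu'ne
      · intro z hz y hy hzy
        rcases (hmemU₁ z).mp (Finset.mem_coe.mp hz) with ⟨hz1, hz2⟩ | hz1 <;>
          rcases (hmemU₁ y).mp (Finset.mem_coe.mp hy) with ⟨hy1, hy2⟩ | hy1
        · exact hU.1.2 z (Finset.mem_coe.mpr hz1) y (Finset.mem_coe.mpr hy1) hzy
        · exact absurd (hy1 ▸ hzy) (h_nosuffix z hz1)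
        · obtain ⟨t, ht⟩ := hzy
          have hylen := hmax y hy1
          have hlen : y.length = t.length + z.length := by rw [← ht]; simp
          have hzlen : z.length = u'.length := by rw [hz1]
          have htlen : t.length ≤ 1 := by omega
          rcases Nat.le_one_iff_eq_zero_or_eq_one.mp htlen with h0 | h1
          · rw [List.length_eq_zero_iff.mp h0, List.nil_append] at ht
            exact ht
          · obtain ⟨b, hb⟩ := List.length_eq_one_iff.mp h1
            rw [hb, hz1] at ht
            exact absurd ⟨b, ht.symm⟩ hy2
        · rw [hz1, hy1]
    have hU₁comp : SufComplete S ↑U₁ := by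
      intro s hs
      obtain ⟨y, hy, hcase⟩ := hUcomp s hs
      by_cases hQ : ∃ b : A, y = b :: u'
      · obtain ⟨b, rfl⟩ := hQ
        have hu'U₁ : u' ∈ (↑U₁ : Set (List A)) :=
          Finset.mem_coe.mpr ((hmemU₁ u').mpr (Or.inr rfl))
        have hsub : u' <:+ b :: u' := ⟨[b], rfl⟩
        rcases hcase with h | h
        · exact ⟨u', hu'U₁, Or.inl (hsub.trans h)⟩
        · rcases List.suffix_cons_iff.mp h with h' | h'
          · exact ⟨u', hu'U₁, Or.inl (h' ▸ hsub)⟩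
          · exact ⟨u', hu'U₁, Or.inr h'⟩
      · exact ⟨y, Finset.mem_coe.mpr ((hmemU₁ y).mpr
          (Or.inl ⟨Finset.mem_coe.mp hy, hQ⟩)), hcase⟩
    have hU₁max : IsSMaxSuffixCode S ↑U₁ := max_of_sufComplete hU₁code hU₁S hU₁comp
    have hsum : U₁.sum List.length < n := by
      have hu'filt : u' ∉ U.filter (fun l => ¬ ∃ b : A, l = b :: u') := by
        intro h
        exact hu'notU (Finset.mem_filter.mp h).1
      have h1 : U₁.sum List.length
          = (U.filter (fun l => ¬ ∃ b : A, l = b :: u')).sum List.length + u'.length := by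
        rw [hU₁def, Finset.sum_union (Finset.disjoint_singleton_right.mpr hu'filt)]
        simp
      have hmfilt : U.filter (fun l => ¬ ∃ b : A, l = b :: u') ⊆ U.erase m := by
        intro z hz
        rw [Finset.mem_filter] at hz
        rw [Finset.mem_erase]
        refine ⟨fun hzm => hz.2 ⟨m.head hmne, hzm.trans hm.symm⟩, hz.1⟩
      have h2 : (U.filter (fun l => ¬ ∃ b : A, l = b :: u')).sum List.length
          ≤ (U.erase m).sum List.length :=
        Finset.sum_le_sum_of_subset hmfilt
      have h3 : (U.erase m).sum List.length + m.length = U.sum List.length :=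
        Finset.sum_erase_add U List.length hmU
      omega
    haveI fR : Fintype ↥(rightExts S (↑V : Set (List A)) w) :=
      (V.finite_toSet.subset (fun r hr => hr.1)).fintype
    haveI fL : Fintype ↥(leftExts S (↑U : Set (List A)) w) :=
      (U.finite_toSet.subset (fun l hl => hl.1)).fintype
    haveI fL₁ : Fintype ↥(leftExts S (↑U₁ : Set (List A)) w) :=
      (U₁.finite_toSet.subset (fun l hl => hl.1)).fintype
    have T₁ : (ExtGraph S (↑U₁ : Set (List A)) (↑V : Set (List A)) w).IsTree :=
      IH (U₁.sum List.length) hsum U₁ rfl hU₁max w hw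
    by_cases hu'w : u' ++ w ∈ S
    -- ======== main subcase ========
    · set L : Set (List A) := leftExts S (↑U : Set (List A)) w with hLdef
      set R : Set (List A) := rightExts S (↑V : Set (List A)) w with hRdef
      set L₁ : Set (List A) := leftExts S (↑U₁ : Set (List A)) w with hL₁def
      set e₀ : ↥L → ↥R → Prop := fun l r => l.val ++ w ++ r.val ∈ S with he₀def
      set qp : ↥L → Prop := fun l => ∃ b : A, l.val = b :: u' with hqpdef
      set pp : ↥R → Prop := fun r => u' ++ w ++ r.val ∈ S with hppdef
      have hu'L₁ : u' ∈ L₁ :=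
        ⟨Finset.mem_coe.mpr ((hmemU₁ u').mpr (Or.inr rfl)), hu'w⟩
      have hp : ∀ r : ↥R, pp r ↔ ∃ l : ↥L, qp l ∧ e₀ l r := by
        intro r
        constructor
        · intro hpr
          obtain ⟨b, hb⟩ := hS.1.extL hpr
          have hbu'S : b :: u' ∈ S := by
            refine hFac.factor_left (u := b :: u') (v := w ++ r.val) ?_
            show (b :: u') ++ (w ++ r.val) ∈ S
            simpa [List.append_assoc] using hb
          have hbu'w : (b :: u') ++ w ∈ S := by
            refine hFac.factor_left (v := r.val) ?_
            show ((b :: u') ++ w) ++ r.val ∈ S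
            simpa [List.append_assoc] using hb
          refine ⟨⟨b :: u', Finset.mem_coe.mpr (h_split_mem b hbu'S), hbu'w⟩, ⟨b, rfl⟩, ?_⟩
          show (b :: u') ++ w ++ r.val ∈ S
          simpa [List.append_assoc] using hb
        · rintro ⟨l, ⟨b, hb⟩, he⟩
          have he' : l.val ++ w ++ r.val ∈ S := he
          rw [hb] at he'
          refine hFac.factor_right (u := [b]) ?_
          show [b] ++ (u' ++ w ++ r.val) ∈ S
          simpa [List.append_assoc] using he'
      have hmem₁ : ∀ l₁ : ↥L₁, l₁.val ≠ u' →
          l₁.val ∈ L ∧ ¬ ∃ b : A, l₁.val = b :: u' := by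
        intro l₁ hne
        rcases (hmemU₁ l₁.val).mp (Finset.mem_coe.mp l₁.2.1) with ⟨h2, h3⟩ | h2
        · exact ⟨⟨Finset.mem_coe.mpr h2, l₁.2.2⟩, h3⟩
        · exact absurd h2 hne
      have hmem₂ : ∀ l : {l : ↥L // ¬ qp l}, l.val.val ∈ L₁ := by
        intro l
        exact ⟨Finset.mem_coe.mpr ((hmemU₁ l.val.val).mpr
          (Or.inl ⟨Finset.mem_coe.mp l.val.2.1, l.2⟩)), l.val.2.2⟩
      set γ : ↥L₁ ≃ Option {l : ↥L // ¬ qp l} :=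
        { toFun := fun l₁ => if h : l₁.val = u' then none else
            some ⟨⟨l₁.val, (hmem₁ l₁ h).1⟩, (hmem₁ l₁ h).2⟩
          invFun := fun o => o.elim ⟨u', hu'L₁⟩ (fun l => ⟨l.val.val, hmem₂ l⟩)
          left_inv := by
            intro l₁
            by_cases h : l₁.val = u'
            · simp only [dif_pos h]
              exact Subtype.ext h.symm
            · simp only [dif_neg h]
              rfl
          right_inv := by
            rintro (_ | l)
            · show (if h : (u' : List A) = u' then none else _) = none
              rw [dif_pos rfl]
            · have hne : l.val.val ≠ u' := by
                intro h
                apply hu'notU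
                have hmem := l.val.2.1
                rw [h] at hmem
                exact Finset.mem_coe.mp hmem
              show (if h : l.val.val = u' then none else _) = some l
              rw [dif_neg hne]
              exact congrArg some (Subtype.ext (Subtype.ext rfl)) } with hγdef
      have hG1 : (Bip (fun (o : Option {l : ↥L // ¬ qp l}) (r : ↥R) =>
          o.elim (pp r) (fun l => e₀ l.val r))).IsTree := by
        refine isTree_map_iso (bipIso γ (Equiv.refl ↥R) ?_) T₁
        intro l₁ r
        by_cases h : l₁.val = u'
        · simp only [hγdef, Equiv.coe_fn_mk, dif_pos h]
          show l₁.val ++ w ++ r.val ∈ S ↔ pp r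
          rw [h]
        · simp only [hγdef, Equiv.coe_fn_mk, dif_neg h]
          exact Iff.rfl
      -- the H graph from stage 1
      set LH : Set (List A) := leftExts S (letterWords A) (u' ++ w) with hLHdef
      set RH : Set (List A) := rightExts S (↑V : Set (List A)) (u' ++ w) with hRHdef
      haveI fLH : Fintype ↥LH := ((Set.finite_range _).subset (fun l hl => hl.1)).fintype
      haveI fRH : Fintype ↥RH := (V.finite_toSet.subset (fun r hr => hr.1)).fintype
      have hαmem : ∀ lh : ↥LH, lh.val ++ u' ∈ L := by
        intro lh
        obtain ⟨b, hb⟩ := lh.2.1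
        have hb' : [b] = lh.val := hb
        have h2 : lh.val ++ (u' ++ w) ∈ S := lh.2.2
        have h2' : (lh.val ++ u') ++ w ∈ S := by simpa [List.append_assoc] using h2
        constructor
        · rw [← hb']
          refine Finset.mem_coe.mpr (h_split_mem b (show b :: u' ∈ S from ?_))
          have := hFac.factor_left h2'
          rw [← hb'] at this
          exact this
        · exact h2'
      have hαq : ∀ lh : ↥LH, qp ⟨lh.val ++ u', hαmem lh⟩ := by
        intro lh
        obtain ⟨b, hb⟩ := lh.2.1
        have hb' : [b] = lh.val := hb
        refine ⟨b, ?_⟩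
        show lh.val ++ u' = b :: u'
        rw [← hb']
        rfl
      have hαinv : ∀ lq : {l : ↥L // qp l}, lq.val.val.take 1 ∈ LH := by
        intro lq
        obtain ⟨b, hb⟩ := lq.2
        constructor
        · rw [hb]
          exact ⟨b, rfl⟩
        · have h2 : lq.val.val ++ w ∈ S := lq.val.2.2
          rw [hb] at h2
          show (lq.val.val.take 1) ++ (u' ++ w) ∈ S
          rw [hb]
          show [b] ++ (u' ++ w) ∈ S
          simpa [List.append_assoc] using h2
      set αH : ↥LH ≃ {l : ↥L // qp l} :=
        { toFun := fun lh => ⟨⟨lh.val ++ u', hαmem lh⟩, hαq lh⟩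
          invFun := fun lq => ⟨lq.val.val.take 1, hαinv lq⟩
          left_inv := by
            intro lh
            obtain ⟨b, hb⟩ := lh.2.1
            have hb' : [b] = lh.val := hb
            refine Subtype.ext ?_
            show (lh.val ++ u').take 1 = lh.val
            rw [← hb']
            rfl
          right_inv := by
            intro lq
            obtain ⟨b, hb⟩ := lq.2
            refine Subtype.ext (Subtype.ext ?_)
            show (lq.val.val.take 1) ++ u' = lq.val.val
            rw [hb]
            rfl } with hαdef
      have hβmem : ∀ rh : ↥RH, rh.val ∈ R := by
        intro rh
        refine ⟨rh.2.1, ?_⟩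
        have h2 : (u' ++ w) ++ rh.val ∈ S := rh.2.2
        refine hFac.factor_right (u := u') ?_
        show u' ++ (w ++ rh.val) ∈ S
        simpa [List.append_assoc] using h2
      have hβp : ∀ rh : ↥RH, pp ⟨rh.val, hβmem rh⟩ := by
        intro rh
        show u' ++ w ++ rh.val ∈ S
        exact rh.2.2
      have hβinv : ∀ rp : {r : ↥R // pp r}, rp.val.val ∈ RH := by
        intro rp
        exact ⟨rp.val.2.1, rp.2⟩
      set βH : ↥RH ≃ {r : ↥R // pp r} :=
        { toFun := fun rh => ⟨⟨rh.val, hβmem rh⟩, hβp rh⟩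
          invFun := fun rp => ⟨rp.val.val, hβinv rp⟩
          left_inv := fun rh => Subtype.ext rfl
          right_inv := fun rp => Subtype.ext (Subtype.ext rfl) } with hβdef
      have hH : (Bip (fun (b : {l : ↥L // qp l}) (rr : {r : ↥R // pp r}) =>
          e₀ b.val rr.val)).IsTree := by
        have TH : (ExtGraph S (letterWords A) (↑V : Set (List A)) (u' ++ w)).IsTree :=
          stage1 hS (V.sum List.length) V rfl hV (u' ++ w) hu'w
        refine isTree_map_iso (bipIso αH βH ?_) TH
        intro lh rh
        show lh.val ++ (u' ++ w) ++ rh.val ∈ S ↔ (lh.val ++ u') ++ w ++ rh.val ∈ S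
        rw [show lh.val ++ (u' ++ w) ++ rh.val = (lh.val ++ u') ++ w ++ rh.val by
          simp [List.append_assoc]]
      exact glue_isTree e₀ qp pp hp hG1 hH
    -- ======== degenerate subcase ========
    · have hle : leftExts S (↑U : Set (List A)) w = leftExts S (↑U₁ : Set (List A)) w := by
        ext l
        constructor
        · rintro ⟨hlU, hlw⟩
          have hnq : ¬ ∃ b : A, l = b :: u' := by
            rintro ⟨b, rfl⟩
            refine hu'w (hFac.factor_right (u := [b]) ?_)
            show [b] ++ (u' ++ w) ∈ S
            simpa [List.append_assoc] using hlw
          exact ⟨Finset.mem_coe.mpr ((hmemU₁ l).mpr (Or.inl ⟨Finset.mem_coe.mp hlU, hnq⟩)),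
            hlw⟩
        · rintro ⟨hlU₁, hlw⟩
          rcases (hmemU₁ l).mp (Finset.mem_coe.mp hlU₁) with ⟨h1, _⟩ | h1
          · exact ⟨Finset.mem_coe.mpr h1, hlw⟩
          · exact absurd (h1 ▸ hlw) hu'w
      rw [extGraph_eq, hle]
      exact T₁

end Stage2
/-- In a tree set, every generalized extension graph `E_{U,V}(w)` with `U` a finite
`S`-maximal suffix code and `V` a finite `S`-maximal prefix code is a tree. -/
theorem statement11 {A : Type*} [Fintype A] (S : Set (List A)) (hS : STree S)
    (w : List A) (hw : w ∈ S) (U V : Set (List A))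
    (hUfin : U.Finite) (hVfin : V.Finite)
    (hU : IsSMaxSuffixCode S U) (hV : IsSMaxPrefixCode S V) :
    (ExtGraph S U V w).IsTree := by
  classical
  have hUf : IsSMaxSuffixCode S (↑hUfin.toFinset : Set (List A)) := by
    rwa [Set.Finite.coe_toFinset]
  have hVf : IsSMaxPrefixCode S (↑hVfin.toFinset : Set (List A)) := by
    rwa [Set.Finite.coe_toFinset]
  have h := stage2 hS hVfin.toFinset hVf (hUfin.toFinset.sum List.length)
    hUfin.toFinset rfl hUf w hw
  rw [extGraph_eq] at h
  rw [show leftExts S (↑hUfin.toFinset : Set (List A)) w = leftExts S U w from by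
      rw [Set.Finite.coe_toFinset],
    show rightExts S (↑hVfin.toFinset : Set (List A)) w = rightExts S V w from by
      rw [Set.Finite.coe_toFinset]] at h
  rw [extGraph_eq]
  exact h
end

section
/- Let S be an acyclic set over a finite alphabet A, let X ⊆ S be a finite bifix code with coding morphism f : B* → A* (f maps the alphabet B bijectively onto X). If the bifix decoding f⁻¹(S) is biextendable, then f⁻¹(S) is acyclic. -/
open List

/-- Decoding of a word over `B` through a coding morphism `f : B* → A*`. -/
def decode {A B : Type*} (f : B → List A) (u : List B) : List A := (u.map f).flatten

/-! ### Auxiliary machinery for statement13 -/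

section Aux13

open SimpleGraph

variable {A : Type*}

/- List helpers -/

private lemma aux13_suffix_len_succ {u v : List A} (h : u <:+ v)
    (hl : v.length = u.length + 1) : ∃ b, v = b :: u := by
  obtain ⟨t, rfl⟩ := h
  rw [List.length_append] at hl
  have ht : t.length = 1 := by omega
  obtain ⟨b, rfl⟩ := List.length_eq_one_iff.mp ht
  exact ⟨b, rfl⟩

private lemma aux13_prefix_len_succ {u v : List A} (h : u <+: v)
    (hl : v.length = u.length + 1) : ∃ b, v = u ++ [b] := by
  obtain ⟨t, rfl⟩ := h
  rw [List.length_append] at hl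
  have ht : t.length = 1 := by omega
  obtain ⟨b, rfl⟩ := List.length_eq_one_iff.mp ht
  exact ⟨b, rfl⟩

/- Walk helpers -/

private lemma aux13_getVert_eq_support {V : Type*} {G : SimpleGraph V} {u v : V}
    (p : G.Walk u v) : ∀ k (hk : k ≤ p.length),
      p.getVert k = p.support[k]'(by rw [SimpleGraph.Walk.length_support]; omega) := by
  induction p with
  | nil =>
    intro k hk
    simp only [SimpleGraph.Walk.length_nil, Nat.le_zero] at hk
    subst hk
    rfl
  | cons h q ih =>
    intro k hk
    cases k with
    | zero => rfl
    | succ k =>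
      simp only [SimpleGraph.Walk.length_cons, Nat.add_le_add_iff_right] at hk
      simp only [SimpleGraph.Walk.getVert_cons_succ, SimpleGraph.Walk.support_cons,
        List.getElem_cons_succ]
      exact ih k hk

private lemma aux13_getVert_injOn {V : Type*} {G : SimpleGraph V} {u v : V}
    {p : G.Walk u v} (hp : p.IsPath) {j k : ℕ} (hj : j ≤ p.length) (hk : k ≤ p.length)
    (h : p.getVert j = p.getVert k) : j = k := by
  rw [aux13_getVert_eq_support p j hj, aux13_getVert_eq_support p k hk] at h
  exact (hp.support_nodup.getElem_inj_iff).mp h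

private lemma aux13_edge_mem {V : Type*} {G : SimpleGraph V} {u v : V}
    (p : G.Walk u v) : ∀ k, k < p.length → s(p.getVert k, p.getVert (k + 1)) ∈ p.edges := by
  induction p with
  | nil => intro k hk; simp at hk
  | cons h q ih =>
    intro k hk
    cases k with
    | zero =>
      simp [SimpleGraph.Walk.getVert_cons_succ]
    | succ k =>
      simp only [SimpleGraph.Walk.length_cons, Nat.add_lt_add_iff_right] at hk
      simp only [SimpleGraph.Walk.getVert_cons_succ, SimpleGraph.Walk.edges_cons, List.mem_cons]
      exact Or.inr (ih k hk)

/- Combinatorial cycles -/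

/-- Combinatorial cycle data in a bipartite extension situation. -/
def CycData13 (S : Set (List A)) (w : List A) (n : ℕ) (l r : ℕ → List A) : Prop :=
  2 ≤ n ∧
  (∀ j, j < n → ∀ k, k < n → l j <:+ l k → j = k) ∧
  (∀ j, j < n → ∀ k, k < n → r j <+: r k → j = k) ∧
  (∀ k, k < n → l k ++ w ++ r k ∈ S ∧ l ((k + 1) % n) ++ w ++ r k ∈ S)

/-- Total length measure of the cycle data. -/
def msr13 (n : ℕ) (l r : ℕ → List A) : ℕ :=
  ∑ k ∈ Finset.range n, ((l k).length + (r k).length)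

private lemma aux13_modsucc (n x : ℕ) : (x % n + 1) % n = (x + 1) % n :=
  Nat.ModEq.add_right 1 (Nat.mod_modEq x n)

private lemma aux13_mod_inj {n i k1 k2 : ℕ} (h1 : k1 < n) (h2 : k2 < n)
    (h : (i + k1) % n = (i + k2) % n) : k1 = k2 := by
  have h' : k1 ≡ k2 [MOD n] := Nat.ModEq.add_left_cancel' i h
  rwa [Nat.ModEq, Nat.mod_eq_of_lt h1, Nat.mod_eq_of_lt h2] at h'

private lemma aux13_find_gap {n : ℕ} (Γ : ℕ → Prop) (hn : 2 ≤ n) {i0 i1 : ℕ}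
    (hi0 : i0 < n) (hΓ0 : Γ i0) (hi1 : i1 < n) (hΓ1 : ¬ Γ i1) :
    ∃ i d, i < n ∧ Γ i ∧ 2 ≤ d ∧ d ≤ n ∧ Γ ((i + d) % n) ∧
      ∀ t, 1 ≤ t → t < d → ¬ Γ ((i + t) % n) := by
  classical
  have hne : i0 ≠ i1 := fun h => hΓ1 (h ▸ hΓ0)
  have hex : ∃ c, 1 ≤ c ∧ c ≤ n ∧ Γ ((i1 + n - c) % n) := by
    rcases Nat.lt_or_ge i0 i1 with h | h
    · refine ⟨i1 - i0, by omega, by omega, ?_⟩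
      have he : i1 + n - (i1 - i0) = n + i0 := by omega
      rw [he, Nat.add_mod_left, Nat.mod_eq_of_lt hi0]
      exact hΓ0
    · have h' : i1 < i0 := by omega
      refine ⟨i1 + n - i0, by omega, by omega, ?_⟩
      have he : i1 + n - (i1 + n - i0) = i0 := by omega
      rw [he, Nat.mod_eq_of_lt hi0]
      exact hΓ0
  set c := Nat.find hex with hcdef
  obtain ⟨hc1, hcn, hΓc⟩ := Nat.find_spec hex
  set i := (i1 + n - c) % n with hidef
  have hilt : i < n := Nat.mod_lt _ (by omega)
  have hdex : ∃ d, 1 ≤ d ∧ Γ ((i + d) % n) := by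
    refine ⟨n, by omega, ?_⟩
    rw [Nat.add_mod_right, Nat.mod_eq_of_lt hilt]
    exact hΓc
  obtain ⟨hd1, hΓd⟩ := Nat.find_spec hdex
  set d := Nat.find hdex with hddef
  have hdn : d ≤ n := Nat.find_le ⟨by omega, by
    rw [Nat.add_mod_right, Nat.mod_eq_of_lt hilt]; exact hΓc⟩
  have hmin : ∀ t, 1 ≤ t → t < d → ¬ Γ ((i + t) % n) := by
    intro t h1 ht hG
    exact Nat.find_min hdex ht ⟨h1, hG⟩
  have hd2 : 2 ≤ d := by
    rcases Nat.lt_or_ge d 2 with h2 | h2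
    · exfalso
      have hd1' : d = 1 := by omega
      have hΓ1' : Γ ((i + 1) % n) := by rw [← hd1']; exact hΓd
      have key : (i + 1) % n = (i1 + n - (c - 1)) % n := by
        rw [hidef, aux13_modsucc n]
        congr 1
        omega
      by_cases hc1' : c = 1
      · have key2 : (i + 1) % n = i1 := by
          rw [key]
          have he2 : i1 + n - (c - 1) = i1 + n := by omega
          rw [he2, Nat.add_mod_right, Nat.mod_eq_of_lt hi1]
        exact hΓ1 (key2 ▸ hΓ1')
      · exact Nat.find_min hex (show c - 1 < c by omega) ⟨by omega, by omega, key ▸ hΓ1'⟩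
    · exact h2
  exact ⟨i, d, hilt, hΓc, hd2, hdn, hΓd, hmin⟩


private lemma aux13_step_left {S : Set (List A)} (hf : Factorial S) {w : List A} {n : ℕ}
    {l r : ℕ → List A} (hC : CycData13 S w n l r)
    (hlong : ∃ k, k < n ∧ 2 ≤ (l k).length) :
    ∃ (w' : List A) (n' : ℕ) (l' r' : ℕ → List A),
      CycData13 S w' n' l' r' ∧ msr13 n' l' r' < msr13 n l r := by
  classical
  obtain ⟨hn, Hl, Hr, E⟩ := hC
  obtain ⟨i0, hi0n, hmax⟩ : ∃ i0, i0 < n ∧ ∀ k, k < n → (l k).length ≤ (l i0).length := by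
    obtain ⟨i0, hi0, h⟩ := Finset.exists_max_image (Finset.range n) (fun k => (l k).length)
      ⟨0, Finset.mem_range.mpr (by omega)⟩
    exact ⟨i0, Finset.mem_range.mp hi0, fun k hk => h k (Finset.mem_range.mpr hk)⟩
  obtain ⟨k2, hk2n, hk2len⟩ := hlong
  have hm2 : 2 ≤ (l i0).length := le_trans hk2len (hmax k2 hk2n)
  have hne : l i0 ≠ [] := by intro h; rw [h] at hm2; simp at hm2
  set u' := (l i0).tail with hu'def
  have hcons : l i0 = (l i0).head hne :: u' := (List.cons_head_tail hne).symm
  have hu'len : u'.length + 1 = (l i0).length := by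
    rw [hu'def, List.length_tail]; omega
  set Γ : ℕ → Prop := fun k => ∃ b, l k = b :: u' with hΓdef
  have hΓi0 : Γ i0 := ⟨_, hcons⟩
  have hΓlen : ∀ k, Γ k → (l k).length = (l i0).length := by
    rintro k ⟨b, hb⟩
    rw [hb, List.length_cons]
    omega
  have hu'suf : u' <:+ l i0 := by
    conv_rhs => rw [hcons]
    exact List.suffix_cons _ _
  have hnotsub : ∀ k, k < n → ¬ (l k <:+ u') := by
    intro k hk hsuf
    have h2 : l k <:+ l i0 := hsuf.trans hu'suf
    have hki := Hl k hk i0 hi0n h2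
    subst hki
    have := hsuf.length_le
    omega
  have hu'up : ∀ k, k < n → u' <:+ l k → Γ k := by
    intro k hk hsuf
    have hlow := hsuf.length_le
    have hup := hmax k hk
    rcases Nat.lt_or_ge (l k).length (l i0).length with hlt | hge
    · exfalso
      have hleq : u'.length = (l k).length := by omega
      have heq : u' = l k := hsuf.eq_of_length hleq
      exact hnotsub k hk (heq ▸ List.suffix_refl u')
    · have hlen : (l k).length = u'.length + 1 := by omega
      exact aux13_suffix_len_succ hsuf hlen
  by_cases hall : ∀ k, k < n → Γ k
  · -- all left words have the form b :: u' : strip u'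
    set F : ℕ → List A := fun k => (l k).take 1 with hFdef
    have hFk : ∀ k, F k = (l k).take 1 := fun k => rfl
    have hFg : ∀ k, Γ k → (l k) = F k ++ u' := by
      rintro k ⟨b, hb⟩
      rw [hFk, hb]
      rfl
    refine ⟨u' ++ w, n, F, r, ⟨hn, ?_, Hr, ?_⟩, ?_⟩
    · intro j hj k hk hsuf
      obtain ⟨bj, hbj⟩ := hall j hj
      obtain ⟨bk, hbk⟩ := hall k hk
      rw [hFk, hFk, hbj, hbk] at hsuf
      simp only [List.take_succ_cons, List.take_zero] at hsuf
      have hbjk : bj = bk := by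
        obtain ⟨t, ht⟩ := hsuf
        have htnil : t = [] := by
          have := congrArg List.length ht
          simp at this
          exact this
        subst htnil
        simpa using ht
      apply Hl j hj k hk
      rw [hbj, hbk, hbjk]
    · intro k hk
      have hk1 : (k + 1) % n < n := Nat.mod_lt _ (by omega)
      constructor
      · have h1 := (E k hk).1
        rw [hFg k (hall k hk)] at h1
        simpa [List.append_assoc] using h1
      · have h2 := (E k hk).2
        rw [hFg _ (hall _ hk1)] at h2
        simpa [List.append_assoc] using h2
    · apply Finset.sum_lt_sum
      · intro k hk
        rw [hFk]
        have := List.length_take (i := 1) (l := l k)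
        omega
      · refine ⟨i0, Finset.mem_range.mpr hi0n, ?_⟩
        rw [hFk]
        have := List.length_take (i := 1) (l := l i0)
        omega
  · push_neg at hall
    obtain ⟨i1, hi1n, hΓ1⟩ := hall
    obtain ⟨i, d, hin, hΓi, hd2, hdn, hΓid, hint⟩ := aux13_find_gap Γ hn hi0n hΓi0 hi1n hΓ1
    have hn0 : 0 < n := by omega
    have hφlt : ∀ k : ℕ, (i + k) % n < n := fun k => Nat.mod_lt _ hn0
    set F : ℕ → List A := fun k => if k = 0 then u' else l ((i + k) % n) with hFdef
    have hF0 : F 0 = u' := rfl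
    have hFne : ∀ k, k ≠ 0 → F k = l ((i + k) % n) := by
      intro k hk
      rw [hFdef]
      exact if_neg hk
    set R : ℕ → List A := fun k => r ((i + k) % n) with hRdef
    have hRk : ∀ k, R k = r ((i + k) % n) := fun k => rfl
    have hRi : R 0 = r i := by rw [hRk, Nat.add_zero, Nat.mod_eq_of_lt hin]
    refine ⟨w, d, F, R, ⟨hd2, ?_, ?_, ?_⟩, ?_⟩
    · -- left suffix condition
      intro j hj k hk hsuf
      by_cases hj0 : j = 0 <;> by_cases hk0 : k = 0
      · rw [hj0, hk0]
      · exfalso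
        subst hj0
        rw [hF0, hFne k hk0] at hsuf
        have hΓk := hu'up _ (hφlt k) hsuf
        exact hint k (by omega) hk hΓk
      · exfalso
        subst hk0
        rw [hF0, hFne j hj0] at hsuf
        exact hnotsub _ (hφlt j) hsuf
      · rw [hFne j hj0, hFne k hk0] at hsuf
        have := Hl _ (hφlt j) _ (hφlt k) hsuf
        exact aux13_mod_inj (by omega) (by omega) this
    · -- right prefix condition
      intro j hj k hk hpre
      rw [hRk, hRk] at hpre
      have := Hr _ (hφlt j) _ (hφlt k) hpre
      exact aux13_mod_inj (by omega) (by omega) this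
    · -- edges
      intro k hk
      constructor
      · by_cases hk0 : k = 0
        · subst hk0
          rw [hF0, hRi]
          obtain ⟨b, hb⟩ := hΓi
          have h1 := (E i hin).1
          rw [hb] at h1
          exact hf _ h1 _ ⟨[b], [], by simp⟩
        · rw [hFne k hk0, hRk]
          exact (E _ (hφlt k)).1
      · by_cases hkd : k + 1 = d
        · have hmodd : (k + 1) % d = 0 := by rw [hkd, Nat.mod_self]
          rw [hmodd, hF0, hRk]
          have h2 := (E _ (hφlt k)).2
          rw [aux13_modsucc n (i + k)] at h2
          have hik : i + k + 1 = i + d := by omega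
          rw [hik] at h2
          obtain ⟨b, hb⟩ := hΓid
          rw [hb] at h2
          exact hf _ h2 _ ⟨[b], [], by simp⟩
        · have hk1d : k + 1 < d := by omega
          rw [Nat.mod_eq_of_lt hk1d, hFne (k + 1) (by omega), hRk]
          have h2 := (E _ (hφlt k)).2
          rw [aux13_modsucc n (i + k)] at h2
          exact h2
    · -- measure decreases
      have hstep : msr13 d F R <
          ∑ k ∈ Finset.range d, ((l ((i + k) % n)).length + (r ((i + k) % n)).length) := by
        apply Finset.sum_lt_sum
        · intro k hk
          rw [hRk]
          by_cases hk0 : k = 0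
          · subst hk0
            rw [hF0]
            simp only [Nat.add_zero, Nat.mod_eq_of_lt hin]
            have := hΓlen i hΓi
            omega
          · rw [hFne k hk0]
        · refine ⟨0, Finset.mem_range.mpr (by omega), ?_⟩
          rw [hF0, hRk]
          simp only [Nat.add_zero, Nat.mod_eq_of_lt hin]
          have := hΓlen i hΓi
          omega
      refine lt_of_lt_of_le hstep ?_
      have himg : ∑ k ∈ Finset.range d, ((l ((i + k) % n)).length + (r ((i + k) % n)).length)
          = ∑ j ∈ (Finset.range d).image (fun k => (i + k) % n),
              ((l j).length + (r j).length) := by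
        rw [Finset.sum_image]
        intro x hx y hy hxy
        exact aux13_mod_inj (by
          have := Finset.mem_range.mp hx; omega) (by
          have := Finset.mem_range.mp hy; omega) hxy
      rw [himg]
      apply Finset.sum_le_sum_of_subset
      intro j hj
      simp only [Finset.mem_image, Finset.mem_range] at hj
      obtain ⟨k, hk, rfl⟩ := hj
      exact Finset.mem_range.mpr (hφlt k)
private lemma aux13_step_right {S : Set (List A)} (hf : Factorial S) {w : List A} {n : ℕ}
    {l r : ℕ → List A} (hC : CycData13 S w n l r)
    (hlong : ∃ k, k < n ∧ 2 ≤ (r k).length) :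
    ∃ (w' : List A) (n' : ℕ) (l' r' : ℕ → List A),
      CycData13 S w' n' l' r' ∧ msr13 n' l' r' < msr13 n l r := by
  classical
  obtain ⟨hn, Hl, Hr, E⟩ := hC
  obtain ⟨i0, hi0n, hmax⟩ : ∃ i0, i0 < n ∧ ∀ k, k < n → (r k).length ≤ (r i0).length := by
    obtain ⟨i0, hi0, h⟩ := Finset.exists_max_image (Finset.range n) (fun k => (r k).length)
      ⟨0, Finset.mem_range.mpr (by omega)⟩
    exact ⟨i0, Finset.mem_range.mp hi0, fun k hk => h k (Finset.mem_range.mpr hk)⟩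
  obtain ⟨k2, hk2n, hk2len⟩ := hlong
  have hm2 : 2 ≤ (r i0).length := le_trans hk2len (hmax k2 hk2n)
  have hne : r i0 ≠ [] := by intro h; rw [h] at hm2; simp at hm2
  set u' := (r i0).dropLast with hu'def
  have hcons : r i0 = u' ++ [(r i0).getLast hne] := (List.dropLast_append_getLast hne).symm
  have hu'len : u'.length + 1 = (r i0).length := by
    rw [hu'def, List.length_dropLast]; omega
  set Γ : ℕ → Prop := fun k => ∃ b, r k = u' ++ [b] with hΓdef
  have hΓi0 : Γ i0 := ⟨_, hcons⟩
  have hΓlen : ∀ k, Γ k → (r k).length = (r i0).length := by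
    rintro k ⟨b, hb⟩
    rw [hb, List.length_append]
    simp
    omega
  have hu'pre : u' <+: r i0 := by
    conv_rhs => rw [hcons]
    exact List.prefix_append _ _
  have hnotsub : ∀ k, k < n → ¬ (r k <+: u') := by
    intro k hk hpre
    have h2 : r k <+: r i0 := hpre.trans hu'pre
    have hki := Hr k hk i0 hi0n h2
    subst hki
    have := hpre.length_le
    omega
  have hu'up : ∀ k, k < n → u' <+: r k → Γ k := by
    intro k hk hpre
    have hlow := hpre.length_le
    have hup := hmax k hk
    rcases Nat.lt_or_ge (r k).length (r i0).length with hlt | hge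
    · exfalso
      have hleq : u'.length = (r k).length := by omega
      have heq : u' = r k := hpre.eq_of_length hleq
      exact hnotsub k hk (heq ▸ List.prefix_refl u')
    · have hlen : (r k).length = u'.length + 1 := by omega
      exact aux13_prefix_len_succ hpre hlen
  by_cases hall : ∀ k, k < n → Γ k
  · -- all right words have the form u' ++ [b] : strip u'
    set F : ℕ → List A := fun k => (r k).drop u'.length with hFdef
    have hFk : ∀ k, F k = (r k).drop u'.length := fun k => rfl
    have hFsing : ∀ k b, r k = u' ++ [b] → F k = [b] := by
      intro k b hb
      rw [hFk, hb, List.drop_left]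
    have hFg : ∀ k, Γ k → (r k) = u' ++ F k := by
      rintro k ⟨b, hb⟩
      rw [hFsing k b hb, hb]
    refine ⟨w ++ u', n, l, F, ⟨hn, Hl, ?_, ?_⟩, ?_⟩
    · intro j hj k hk hpre
      obtain ⟨bj, hbj⟩ := hall j hj
      obtain ⟨bk, hbk⟩ := hall k hk
      rw [hFsing j bj hbj, hFsing k bk hbk] at hpre
      have hbjk : bj = bk := by
        obtain ⟨t, ht⟩ := hpre
        have htnil : t = [] := by
          have := congrArg List.length ht
          simp at this
          exact this
        subst htnil
        simpa using ht
      apply Hr j hj k hk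
      rw [hbj, hbk, hbjk]
    · intro k hk
      constructor
      · have h1 := (E k hk).1
        rw [hFg k (hall k hk)] at h1
        simpa [List.append_assoc] using h1
      · have h2 := (E k hk).2
        rw [hFg k (hall k hk)] at h2
        simpa [List.append_assoc] using h2
    · apply Finset.sum_lt_sum
      · intro k hk
        rw [hFk]
        have := List.length_drop (i := u'.length) (l := r k)
        omega
      · refine ⟨i0, Finset.mem_range.mpr hi0n, ?_⟩
        rw [hFk]
        have := List.length_drop (i := u'.length) (l := r i0)
        omega
  · push_neg at hall
    obtain ⟨i1, hi1n, hΓ1⟩ := hall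
    obtain ⟨i, d, hin, hΓi, hd2, hdn, hΓid, hint⟩ := aux13_find_gap Γ hn hi0n hΓi0 hi1n hΓ1
    have hn0 : 0 < n := by omega
    have hφlt : ∀ k : ℕ, (i + 1 + k) % n < n := fun k => Nat.mod_lt _ hn0
    set F : ℕ → List A := fun k => l ((i + 1 + k) % n) with hFdef
    have hFk : ∀ k, F k = l ((i + 1 + k) % n) := fun k => rfl
    set R : ℕ → List A := fun k => if k = d - 1 then u' else r ((i + 1 + k) % n) with hRdef
    have hRd : R (d - 1) = u' := by rw [hRdef]; exact if_pos rfl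
    have hRne : ∀ k, k ≠ d - 1 → R k = r ((i + 1 + k) % n) := by
      intro k hk
      rw [hRdef]
      exact if_neg hk
    have hidx : ∀ k, i + 1 + k = i + (k + 1) := by intro k; omega
    have hΓint : ∀ k, k < d - 1 → ¬ Γ ((i + 1 + k) % n) := by
      intro k hk
      rw [hidx k]
      exact hint (k + 1) (by omega) (by omega)
    refine ⟨w, d, F, R, ⟨hd2, ?_, ?_, ?_⟩, ?_⟩
    · -- left suffix condition
      intro j hj k hk hsuf
      rw [hFk, hFk] at hsuf
      have := Hl _ (hφlt j) _ (hφlt k) hsuf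
      exact aux13_mod_inj (by omega) (by omega) this
    · -- right prefix condition
      intro j hj k hk hpre
      by_cases hj0 : j = d - 1 <;> by_cases hk0 : k = d - 1
      · rw [hj0, hk0]
      · exfalso
        subst hj0
        rw [hRd, hRne k hk0] at hpre
        have hΓk := hu'up _ (hφlt k) hpre
        exact hΓint k (by omega) hΓk
      · exfalso
        subst hk0
        rw [hRd, hRne j hj0] at hpre
        exact hnotsub _ (hφlt j) hpre
      · rw [hRne j hj0, hRne k hk0] at hpre
        have := Hr _ (hφlt j) _ (hφlt k) hpre
        exact aux13_mod_inj (by omega) (by omega) this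
    · -- edges
      intro k hk
      constructor
      · by_cases hk0 : k = d - 1
        · subst hk0
          rw [hRd, hFk]
          have hix : i + 1 + (d - 1) = i + d := by omega
          rw [hix]
          obtain ⟨b, hb⟩ := hΓid
          have h1 := (E _ (Nat.mod_lt (i + d) hn0)).1
          rw [hb] at h1
          exact hf _ h1 _ ⟨[], [b], by simp⟩
        · rw [hRne k hk0, hFk]
          exact (E _ (hφlt k)).1
      · by_cases hkd : k + 1 = d
        · have hkdd : k = d - 1 := by omega
          have hmodd : (k + 1) % d = 0 := by rw [hkd, Nat.mod_self]
          rw [hmodd, hkdd, hRd, hFk]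
          have h2 := (E i hin).2
          obtain ⟨b, hb⟩ := hΓi
          rw [hb] at h2
          have hix : i + 1 + 0 = i + 1 := by omega
          rw [hix]
          exact hf _ h2 _ ⟨[], [b], by simp⟩
        · have hk1d : k + 1 < d := by omega
          rw [Nat.mod_eq_of_lt hk1d, hFk, hRne k (by omega)]
          have h2 := (E _ (hφlt k)).2
          rw [aux13_modsucc n (i + 1 + k)] at h2
          have hx : i + 1 + (k + 1) = i + 1 + k + 1 := by omega
          rw [hx]
          exact h2
    · -- measure decreases
      have hstep : msr13 d F R <
          ∑ k ∈ Finset.range d, ((l ((i + 1 + k) % n)).length + (r ((i + 1 + k) % n)).length) := by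
        apply Finset.sum_lt_sum
        · intro k hk
          rw [hFk]
          by_cases hk0 : k = d - 1
          · subst hk0
            rw [hRd]
            have hix : i + 1 + (d - 1) = i + d := by omega
            rw [hix]
            have := hΓlen _ hΓid
            omega
          · rw [hRne k hk0]
        · refine ⟨d - 1, Finset.mem_range.mpr (by omega), ?_⟩
          rw [hFk, hRd]
          have hix : i + 1 + (d - 1) = i + d := by omega
          rw [hix]
          have := hΓlen _ hΓid
          omega
      refine lt_of_lt_of_le hstep ?_
      have himg : ∑ k ∈ Finset.range d, ((l ((i + 1 + k) % n)).length + (r ((i + 1 + k) % n)).length)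
          = ∑ j ∈ (Finset.range d).image (fun k => (i + 1 + k) % n),
              ((l j).length + (r j).length) := by
        rw [Finset.sum_image]
        intro x hx y hy hxy
        exact aux13_mod_inj (by
          have := Finset.mem_range.mp hx; omega) (by
          have := Finset.mem_range.mp hy; omega) hxy
      rw [himg]
      apply Finset.sum_le_sum_of_subset
      intro j hj
      simp only [Finset.mem_image, Finset.mem_range] at hj
      obtain ⟨k, hk, rfl⟩ := hj
      exact Finset.mem_range.mpr (hφlt k)
private lemma aux13_base {S : Set (List A)} (hS : SAcyclic S) {w : List A} {n : ℕ}
    {l r : ℕ → List A} (hC : CycData13 S w n l r)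
    (h1 : ∀ k, k < n → (l k).length = 1) (h2 : ∀ k, k < n → (r k).length = 1) : False := by
  obtain ⟨hn, Hl, Hr, E⟩ := hC
  have hn0 : 0 < n := by omega
  have hfac : Factorial S := hS.1.1
  have hwS : w ∈ S := hfac _ (E 0 hn0).1 w ⟨l 0, r 0, rfl⟩
  have hlmem : ∀ k : ℕ, l (k % n) ∈ leftExts S (letterWords A) w := by
    intro k
    have hk : k % n < n := Nat.mod_lt _ hn0
    obtain ⟨a, ha⟩ := List.length_eq_one_iff.mp (h1 _ hk)
    refine ⟨⟨a, ha.symm⟩, ?_⟩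
    exact hfac _ (E _ hk).1 _ ⟨[], r (k % n), by simp⟩
  have hrmem : ∀ k : ℕ, r (k % n) ∈ rightExts S (letterWords A) w := by
    intro k
    have hk : k % n < n := Nat.mod_lt _ hn0
    obtain ⟨a, ha⟩ := List.length_eq_one_iff.mp (h2 _ hk)
    refine ⟨⟨a, ha.symm⟩, ?_⟩
    exact hfac _ (E _ hk).1 _ ⟨l (k % n), [], by simp⟩
  set G := EGraph S w with hGdef
  set vl : ℕ → (↥(leftExts S (letterWords A) w) ⊕ ↥(rightExts S (letterWords A) w)) :=
    fun k => Sum.inl ⟨l (k % n), hlmem k⟩ with hvldef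
  set vr : ℕ → (↥(leftExts S (letterWords A) w) ⊕ ↥(rightExts S (letterWords A) w)) :=
    fun k => Sum.inr ⟨r (k % n), hrmem k⟩ with hvrdef
  have adj1 : ∀ k, G.Adj (vl k) (vr k) := by
    intro k
    exact Or.inl ⟨_, _, rfl, rfl, (E _ (Nat.mod_lt _ hn0)).1⟩
  have adj2 : ∀ k, G.Adj (vl (k + 1)) (vr k) := by
    intro k
    have h := (E (k % n) (Nat.mod_lt _ hn0)).2
    rw [aux13_modsucc n k] at h
    exact Or.inl ⟨_, _, rfl, rfl, h⟩
  have hvl : ∀ j k, vl j = vl k → j % n = k % n := by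
    intro j k h
    simp only [hvldef, Sum.inl.injEq, Subtype.mk.injEq] at h
    exact Hl _ (Nat.mod_lt _ hn0) _ (Nat.mod_lt _ hn0) (h ▸ List.suffix_refl _)
  have hvr : ∀ j k, vr j = vr k → j % n = k % n := by
    intro j k h
    simp only [hvrdef, Sum.inr.injEq, Subtype.mk.injEq] at h
    exact Hr _ (Nat.mod_lt _ hn0) _ (Nat.mod_lt _ hn0) (h ▸ List.prefix_refl _)
  have vln0 : vl n = vl 0 := by
    simp only [hvldef]
    exact congrArg Sum.inl (Subtype.ext (by simp))
  have hedge : ∀ j k, j % n ≠ 0 ∨ k % n ≠ 0 → s(vl j, vr k) ≠ s(vl 0, vr 0) := by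
    intro j k hjk h
    rw [Sym2.eq_iff] at h
    rcases h with ⟨ha, hb⟩ | ⟨ha, hb⟩
    · rcases hjk with hj | hk
      · exact hj (by simpa using hvl _ _ ha)
      · exact hk (by simpa using hvr _ _ hb)
    · simp only [hvldef, hvrdef] at ha
      exact absurd ha (by simp)
  have hedgeL : ∀ j k, j % n ≠ 0 ∨ k % n ≠ 0 → ¬ s(vl 0, vr 0) = s(vl j, vr k) :=
    fun j k c h => hedge j k c h.symm
  have hedgeR : ∀ j k, j % n ≠ 0 ∨ k % n ≠ 0 → ¬ s(vl 0, vr 0) = s(vr k, vl j) :=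
    fun j k c h => hedge j k c (h.trans Sym2.eq_swap).symm
  have walkk : ∀ k, 1 ≤ k → k ≤ n - 1 → ∃ p : G.Walk (vl k) (vr 0), s(vl 0, vr 0) ∉ p.edges := by
    intro k
    induction k with
    | zero => omega
    | succ k ihk =>
      intro _ hk1
      by_cases hk0 : k = 0
      · subst hk0
        refine ⟨SimpleGraph.Walk.cons (adj2 0) SimpleGraph.Walk.nil, ?_⟩
        simp only [SimpleGraph.Walk.edges_cons, SimpleGraph.Walk.edges_nil, List.mem_cons,
          List.not_mem_nil, or_false]
        exact hedgeL 1 0 (Or.inl (by rw [Nat.mod_eq_of_lt (by omega)]; omega))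
      · obtain ⟨p, hp⟩ := ihk (by omega) (by omega)
        refine ⟨SimpleGraph.Walk.cons (adj2 k) (SimpleGraph.Walk.cons (adj1 k).symm p), ?_⟩
        simp only [SimpleGraph.Walk.edges_cons, List.mem_cons, not_or]
        refine ⟨?_, ?_, hp⟩
        · exact hedgeL (k + 1) k (Or.inr (by rw [Nat.mod_eq_of_lt (by omega)]; omega))
        · exact hedgeR k k (Or.inl (by rw [Nat.mod_eq_of_lt (by omega)]; omega))
  obtain ⟨p, hp⟩ := walkk (n - 1) (by omega) le_rfl
  have adjTop : G.Adj (vl 0) (vr (n - 1)) := by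
    have h := adj2 (n - 1)
    have he : n - 1 + 1 = n := by omega
    rw [he, vln0] at h
    exact h
  have pfull : ∃ q : G.Walk (vl 0) (vr 0), s(vl 0, vr 0) ∉ q.edges := by
    refine ⟨SimpleGraph.Walk.cons adjTop (SimpleGraph.Walk.cons (adj1 (n - 1)).symm p), ?_⟩
    simp only [SimpleGraph.Walk.edges_cons, List.mem_cons, not_or]
    refine ⟨?_, ?_, hp⟩
    · exact hedgeL 0 (n - 1) (Or.inr (by rw [Nat.mod_eq_of_lt (by omega)]; omega))
    · exact hedgeR (n - 1) (n - 1) (Or.inl (by rw [Nat.mod_eq_of_lt (by omega)]; omega))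
  obtain ⟨q, hq⟩ := pfull
  have hac := hS.2 w hwS
  rw [SimpleGraph.isAcyclic_iff_forall_adj_isBridge] at hac
  have hbr := hac (adj1 0)
  rw [SimpleGraph.isBridge_iff] at hbr
  exact hbr (SimpleGraph.reachable_delete_edges_iff_exists_walk.mpr ⟨q, hq⟩)

private lemma aux13_no_cyc {S : Set (List A)} (hS : SAcyclic S) :
    ∀ N (w : List A) (n : ℕ) (l r : ℕ → List A),
      msr13 n l r ≤ N → CycData13 S w n l r → False := by
  intro N
  induction N using Nat.strong_induction_on with
  | _ N ih =>
    intro w n l r hm hC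
    by_cases hlong : ∃ k, k < n ∧ 2 ≤ (l k).length
    · obtain ⟨w', n', l', r', hC', hlt⟩ := aux13_step_left hS.1.1 hC hlong
      exact ih (msr13 n' l' r') (by omega) w' n' l' r' le_rfl hC'
    · by_cases hrlong : ∃ k, k < n ∧ 2 ≤ (r k).length
      · obtain ⟨w', n', l', r', hC', hlt⟩ := aux13_step_right hS.1.1 hC hrlong
        exact ih (msr13 n' l' r') (by omega) w' n' l' r' le_rfl hC'
      · push_neg at hlong hrlong
        obtain ⟨hn, Hl, Hr, E⟩ := hC
        have hlne : ∀ k, k < n → (l k).length = 1 := by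
          intro k hk
          have hub := hlong k hk
          rcases Nat.lt_or_ge (l k).length 1 with h | h
          · exfalso
            have hnil : l k = [] := List.length_eq_zero_iff.mp (by omega)
            have h0 := Hl k hk 0 (by omega) (by rw [hnil]; exact List.nil_suffix)
            have h1 := Hl k hk 1 (by omega) (by rw [hnil]; exact List.nil_suffix)
            omega
          · omega
        have hrne : ∀ k, k < n → (r k).length = 1 := by
          intro k hk
          have hub := hrlong k hk
          rcases Nat.lt_or_ge (r k).length 1 with h | h
          · exfalso
            have hnil : r k = [] := List.length_eq_zero_iff.mp (by omega)
            have h0 := Hr k hk 0 (by omega) (by rw [hnil]; exact List.nil_prefix)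
            have h1 := Hr k hk 1 (by omega) (by rw [hnil]; exact List.nil_prefix)
            omega
          · omega
        exact aux13_base hS ⟨hn, Hl, Hr, E⟩ hlne hrne
private lemma aux13_extract_aux (S U V : Set (List A)) (w : List A)
    {L : ↥(leftExts S U w)} {R : ↥(rightExts S V w)}
    (q : (ExtGraph S U V w).Walk (Sum.inl L) (Sum.inr R)) (hq : q.IsPath)
    (he : s((Sum.inl L : ↥(leftExts S U w) ⊕ ↥(rightExts S V w)), Sum.inr R) ∉ q.edges)
    (hmem : L.val ++ w ++ R.val ∈ S) :
    ∃ n : ℕ, ∃ l r : ℕ → List A, 2 ≤ n ∧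
      (∀ j, j < n → ∀ k, k < n → l j = l k → j = k) ∧
      (∀ j, j < n → ∀ k, k < n → r j = r k → j = k) ∧
      (∀ k, k < n → l k ∈ leftExts S U w) ∧ (∀ k, k < n → r k ∈ rightExts S V w) ∧
      (∀ k, k < n → l k ++ w ++ r k ∈ S ∧ l ((k + 1) % n) ++ w ++ r k ∈ S) := by
  classical
  have hpar : ∀ k, k ≤ q.length → ((q.getVert k).isLeft = true ↔ Even k) := by
    intro k
    induction k with
    | zero =>
      intro _
      simp [q.getVert_zero]
    | succ k ihk =>
      intro hk
      have hflip : (q.getVert (k + 1)).isLeft = !(q.getVert k).isLeft := by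
        rcases q.adj_getVert_succ (show k < q.length by omega) with
          ⟨l0, r0, hx, hy, _⟩ | ⟨l0, r0, hx, hy, _⟩
        · rw [hx, hy]; rfl
        · rw [hx, hy]; rfl
      rw [hflip, Nat.even_add_one]
      have hik := ihk (by omega)
      rw [Bool.not_eq_true']
      rw [← hik]
      simp
  have hodd : ¬ Even q.length := by
    intro hev
    have := (hpar q.length le_rfl).mpr hev
    rw [q.getVert_length] at this
    simp at this
  obtain ⟨t, ht⟩ : ∃ t, q.length = 2 * t + 1 := by
    rcases Nat.even_or_odd q.length with h | h
    · exact absurd h hodd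
    · obtain ⟨t, ht⟩ := h
      exact ⟨t, ht⟩
  have hlen1 : q.length ≠ 1 := by
    intro h1
    apply he
    have hmm := aux13_edge_mem q 0 (by omega)
    rw [show (0 : ℕ) + 1 = q.length by omega] at hmm
    rw [q.getVert_zero, q.getVert_length] at hmm
    exact hmm
  have ht1 : 1 ≤ t := by omega
  have hLex : ∀ k, k ≤ t → ∃ (Lk : ↥(leftExts S U w)) (Rk : ↥(rightExts S V w)),
      q.getVert (2 * k) = Sum.inl Lk ∧ q.getVert (2 * k + 1) = Sum.inr Rk ∧
        Lk.val ++ w ++ Rk.val ∈ S := by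
    intro k hk
    rcases q.adj_getVert_succ (show 2 * k < q.length by omega) with
      ⟨l0, r0, hx, hy, hm⟩ | ⟨l0, r0, hx, hy, hm⟩
    · exact ⟨l0, r0, hx, hy, hm⟩
    · exfalso
      have hev : Even (2 * k) := ⟨k, by omega⟩
      have := (hpar (2 * k) (by omega)).mpr hev
      rw [hx] at this
      simp at this
  choose Lf Rf hL hR hM using hLex
  set l : ℕ → List A := fun k => if hk : k ≤ t then (Lf k hk).val else [] with hldef
  set r : ℕ → List A := fun k => if hk : k ≤ t then (Rf k hk).val else [] with hrdef
  have hlk : ∀ k (hk : k ≤ t), l k = (Lf k hk).val := by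
    intro k hk
    rw [hldef]
    exact dif_pos hk
  have hrk : ∀ k (hk : k ≤ t), r k = (Rf k hk).val := by
    intro k hk
    rw [hrdef]
    exact dif_pos hk
  have hgetinj := fun {j k : ℕ} (hj : j ≤ q.length) (hk : k ≤ q.length)
    (h : q.getVert j = q.getVert k) => aux13_getVert_injOn hq hj hk h
  refine ⟨t + 1, l, r, by omega, ?_, ?_, ?_, ?_, ?_⟩
  · intro j hj k hk h
    have hj' : j ≤ t := by omega
    have hk' : k ≤ t := by omega
    rw [hlk j hj', hlk k hk'] at h
    have hv : q.getVert (2 * j) = q.getVert (2 * k) := by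
      rw [hL j hj', hL k hk']
      exact congrArg Sum.inl (Subtype.ext h)
    have := hgetinj (by omega) (by omega) hv
    omega
  · intro j hj k hk h
    have hj' : j ≤ t := by omega
    have hk' : k ≤ t := by omega
    rw [hrk j hj', hrk k hk'] at h
    have hv : q.getVert (2 * j + 1) = q.getVert (2 * k + 1) := by
      rw [hR j hj', hR k hk']
      exact congrArg Sum.inr (Subtype.ext h)
    have := hgetinj (by omega) (by omega) hv
    omega
  · intro k hk
    have hk' : k ≤ t := by omega
    rw [hlk k hk']
    exact (Lf k hk').property
  · intro k hk
    have hk' : k ≤ t := by omega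
    rw [hrk k hk']
    exact (Rf k hk').property
  · intro k hk
    have hk' : k ≤ t := by omega
    constructor
    · rw [hlk k hk', hrk k hk']
      exact hM k hk'
    · by_cases hkt : k = t
      · have hmod : (k + 1) % (t + 1) = 0 := by rw [hkt]; exact Nat.mod_self _
        rw [hmod]
        have hL0 : l 0 = L.val := by
          rw [hlk 0 (by omega)]
          have h0 := hL 0 (by omega)
          rw [show 2 * 0 = 0 by omega, q.getVert_zero] at h0
          have h0' := Sum.inl.inj h0
          rw [← h0']
        have hRt : r k = R.val := by
          rw [hrk k hk']
          have h0 := hR k hk'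
          rw [show 2 * k + 1 = q.length by omega, q.getVert_length] at h0
          have h0' := Sum.inr.inj h0
          rw [← h0']
        rw [hL0, hRt]
        exact hmem
      · have hk1 : k + 1 ≤ t := by omega
        rw [Nat.mod_eq_of_lt (by omega), hlk (k + 1) hk1, hrk k hk']
        rcases q.adj_getVert_succ (show 2 * k + 1 < q.length by omega) with
          ⟨l0, r0, hx, hy, hm⟩ | ⟨l0, r0, hx, hy, hm⟩
        · exfalso
          have hev := (hpar (2 * k + 1) (by omega)).mp (by rw [hx]; rfl)
          obtain ⟨c, hc⟩ := hev
          omega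
        · have e1 : r0 = Rf k hk' := by
            have := hR k hk'
            rw [hx] at this
            exact Sum.inr.inj this
          have e2 : l0 = Lf (k + 1) hk1 := by
            have := hL (k + 1) hk1
            rw [show 2 * (k + 1) = 2 * k + 1 + 1 by omega, hy] at this
            exact Sum.inl.inj this
          rw [← e1, ← e2]
          exact hm


private lemma aux13_extract (S U V : Set (List A)) (w : List A)
    (h : ¬ (ExtGraph S U V w).IsAcyclic) :
    ∃ n : ℕ, ∃ l r : ℕ → List A, 2 ≤ n ∧
      (∀ j, j < n → ∀ k, k < n → l j = l k → j = k) ∧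
      (∀ j, j < n → ∀ k, k < n → r j = r k → j = k) ∧
      (∀ k, k < n → l k ∈ leftExts S U w) ∧ (∀ k, k < n → r k ∈ rightExts S V w) ∧
      (∀ k, k < n → l k ++ w ++ r k ∈ S ∧ l ((k + 1) % n) ++ w ++ r k ∈ S) := by
  classical
  rw [SimpleGraph.isAcyclic_iff_forall_adj_isBridge] at h
  push_neg at h
  obtain ⟨x, y, hadj, hnb⟩ := h
  have hreach : ((ExtGraph S U V w) \ SimpleGraph.fromEdgeSet {s(x, y)}).Reachable x y := by
    by_contra hc
    rw [SimpleGraph.isBridge_iff] at hnb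
    exact hnb hc
  obtain ⟨p0, he0⟩ := SimpleGraph.reachable_delete_edges_iff_exists_walk.mp hreach
  have hq : (p0.toPath : (ExtGraph S U V w).Walk x y).IsPath := p0.toPath.2
  have heq : s(x, y) ∉ (p0.toPath : (ExtGraph S U V w).Walk x y).edges :=
    fun hm => he0 (SimpleGraph.Walk.edges_toPath_subset p0 hm)
  rcases hadj with ⟨L, R, hx, hy, hmem⟩ | ⟨L, R, hx, hy, hmem⟩
  · subst hx; subst hy
    exact aux13_extract_aux S U V w (p0.toPath : _) hq heq hmem
  · subst hx; subst hy
    refine aux13_extract_aux S U V w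
      (p0.toPath : (ExtGraph S U V w).Walk (Sum.inr R) (Sum.inl L)).reverse
      hq.reverse ?_ hmem
    rw [SimpleGraph.Walk.edges_reverse, List.mem_reverse]
    intro hm
    apply heq
    rw [Sym2.eq_swap]
    exact hm

end Aux13

/-- Any biextendable bifix decoding of an acyclic set is acyclic. -/
theorem statement13 {A B : Type*} [Fintype A] [Fintype B] (S X : Set (List A))
    (f : B → List A) (hS : SAcyclic S) (hXS : X ⊆ S) (hXfin : X.Finite)
    (hX : IsBifixCode X) (hinj : Function.Injective f) (hran : Set.range f = X)
    (hbe : Biext {u : List B | decode f u ∈ S}) :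
    SAcyclic {u : List B | decode f u ∈ S} := by
    classical
  refine ⟨hbe, ?_⟩
  intro u hu
  by_contra hna
  obtain ⟨n, l, r, hn2, hlinj, hrinj, hlmem, hrmem, hE⟩ :=
    aux13_extract {v : List B | decode f v ∈ S} (letterWords B) (letterWords B) u hna
  have hdecapp : ∀ x y : List B, decode f (x ++ y) = decode f x ++ decode f y := by
    intro x y
    simp [decode]
  have hdecsing : ∀ b : B, decode f [b] = f b := by
    intro b
    simp [decode]
  have hfX : ∀ b : B, f b ∈ X := by
    intro b
    rw [← hran]
    exact ⟨b, rfl⟩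
  have hsing : ∀ k, k < n → ∃ b : B, l k = [b] := by
    intro k hk
    obtain ⟨b, hb⟩ := (hlmem k hk).1
    exact ⟨b, hb.symm⟩
  have hrsing : ∀ k, k < n → ∃ b : B, r k = [b] := by
    intro k hk
    obtain ⟨b, hb⟩ := (hrmem k hk).1
    exact ⟨b, hb.symm⟩
  refine aux13_no_cyc hS (msr13 n (fun k => decode f (l k)) (fun k => decode f (r k)))
      (decode f u) n (fun k => decode f (l k)) (fun k => decode f (r k)) le_rfl
      ⟨hn2, ?_, ?_, ?_⟩
  · intro j hj k hk hsuf
    obtain ⟨bj, hbj⟩ := hsing j hj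
    obtain ⟨bk, hbk⟩ := hsing k hk
    have hsuf' : decode f (l j) <:+ decode f (l k) := hsuf
    rw [hbj, hbk, hdecsing, hdecsing] at hsuf'
    have heq : f bj = f bk := hX.2.2 _ (hfX bj) _ (hfX bk) hsuf'
    have hbb : bj = bk := hinj heq
    apply hlinj j hj k hk
    rw [hbj, hbk, hbb]
  · intro j hj k hk hpre
    obtain ⟨bj, hbj⟩ := hrsing j hj
    obtain ⟨bk, hbk⟩ := hrsing k hk
    have hpre' : decode f (r j) <+: decode f (r k) := hpre
    rw [hbj, hbk, hdecsing, hdecsing] at hpre'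
    have heq : f bj = f bk := hX.1.2 _ (hfX bj) _ (hfX bk) hpre'
    have hbb : bj = bk := hinj heq
    apply hrinj j hj k hk
    rw [hbj, hbk, hbb]
  · intro k hk
    have hk1 : (k + 1) % n < n := Nat.mod_lt _ (by omega)
    have h1 : decode f (l k ++ u ++ r k) ∈ S := (hE k hk).1
    have h2 : decode f (l ((k + 1) % n) ++ u ++ r k) ∈ S := (hE k hk).2
    constructor
    · show decode f (l k) ++ decode f u ++ decode f (r k) ∈ S
      rw [← hdecapp, ← hdecapp]
      exact h1
    · show decode f (l ((k + 1) % n)) ++ decode f u ++ decode f (r k) ∈ S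
      rw [← hdecapp, ← hdecapp]
      exact h2
end
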